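/- arXiv:0905.3380 — 4 statements merged into one kernel-verified Lean document; each statement's English description precedes it below -/
import Mathlib

section
/- Let F be a set of blue points, let 1 ≤ k ≤ |F|, and suppose that the weight of F_k is δ at time t and δ−1 at time t+1. Then the transposition τ_{t+1} swaps some point f of F with a point x not in F, and moreover: either (i) τ_{t+1} moves f to the right and x is red, in which case τ_{t+1} is balanced and in π^t there are exactly k−1 points of F strictly to the left of the transposed pair; or (ii) τ_{t+1} moves f to the left and x is a blue point not in F. -/
open Finset

/-- An allowable sequence on `n` points (the points are the elements of `Fin n`).
`pos t x` is the position (from left to right, `0`-based) of point `x`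
in the linear ordering `π^t`. -/
structure AllowableSeq (n : ℕ) where
  pos : ℤ → Equiv.Perm (Fin n)
  adj : ∀ t : ℤ, ∃ p q : Fin n,
    ((pos t q : ℕ) = (pos t p : ℕ) + 1) ∧
    pos (t + 1) = (Equiv.swap p q).trans (pos t)
  rev : ∀ t : ℤ, pos (t + (n.choose 2 : ℤ)) = (pos t).trans Fin.revPerm

namespace AllowableSeq

variable {n : ℕ}

/-- The weight of a point: `+1` for blue, `-1` for red. -/
def wt (blue : Fin n → Bool) (x : Fin n) : ℤ := if blue x then 1 else -1

/-- The transposition `τ_{t+1}` (leading from `π^t` to `π^{t+1}`) swaps the points `p` and `q`. -/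
def SwapsAt (A : AllowableSeq n) (t : ℤ) (p q : Fin n) : Prop :=
  p ≠ q ∧ A.pos (t + 1) = (Equiv.swap p q).trans (A.pos t)

/-- `τ_{t+1}` is a balanced transposition swapping `p` and `q`: one of them is blue and the
other red, and the total weight of the points strictly to the left of the adjacent
pair in `π^t` equals `δ`. -/
def BalancedSwap (A : AllowableSeq n) (blue : Fin n → Bool) (δ : ℤ) (t : ℤ)
    (p q : Fin n) : Prop :=
  A.SwapsAt t p q ∧ (blue p ↔ ¬ blue q) ∧
  (∑ x : Fin n, if (A.pos t x : ℕ) < min (A.pos t p : ℕ) (A.pos t q : ℕ)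
      then wt blue x else 0) = δ

/-- The set of unordered pairs of points swapped by some balanced transposition of the
allowable sequence; its cardinality is the number of distinct balanced transpositions. -/
def balancedPairs (A : AllowableSeq n) (blue : Fin n → Bool) (δ : ℤ) : Set (Sym2 (Fin n)) :=
  { s | ∃ p q t, s = s(p, q) ∧ A.BalancedSwap blue δ t p q }

/-- A curve: a map `ℤ → Fin n` that is periodic with period `2 * C(n,2)`. -/
def IsCurve (A : AllowableSeq n) (γ : ℤ → Fin n) : Prop :=
  ∀ t : ℤ, γ (t + 2 * (n.choose 2 : ℤ)) = γ t

/-- The weight of a curve `γ` at time `t`: the sum of the weights of the points lying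
strictly to the left of `γ t` in `π^t`. -/
def cweight (A : AllowableSeq n) (blue : Fin n → Bool) (γ : ℤ → Fin n) (t : ℤ) : ℤ :=
  ∑ x : Fin n, if A.pos t x < A.pos t (γ t) then wt blue x else 0

/-- `γ` is the curve `Q_k` (with `k` 1-based): at every time `t`, `γ t` is the `k`-th point
of `Q` from left to right in `π^t`, i.e. `γ t ∈ Q` and exactly `k - 1` points of `Q` lie
strictly to the left of `γ t`. -/
def IsKth (A : AllowableSeq n) (Q : Finset (Fin n)) (k : ℕ) (γ : ℤ → Fin n) : Prop :=
  ∀ t : ℤ, γ t ∈ Q ∧ (Q.filter (fun x => A.pos t x < A.pos t (γ t))).card = k - 1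

/-- The mirror curve `γ̄` of `γ`, defined by `γ̄ (t + C(n,2)) = γ t`. -/
def mirror (γ : ℤ → Fin n) : ℤ → Fin n := fun t => γ (t - (n.choose 2 : ℤ))

/-- A border: a curve that is either blue and `≥δ` or red and `≤δ`, such that
(I) consecutive values are equal or have no point of the same colour between them, and
(II) it lies strictly to the left of its mirror curve. -/
def IsBorder (A : AllowableSeq n) (blue : Fin n → Bool) (δ : ℤ) (γ : ℤ → Fin n) : Prop :=
  A.IsCurve γ ∧
  (∀ t : ℤ, A.pos t (γ t) < A.pos t (mirror γ t)) ∧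
  (((∀ t : ℤ, blue (γ t) = true) ∧ (∀ t : ℤ, δ ≤ A.cweight blue γ t) ∧
      ∀ t : ℤ, γ (t + 1) = γ t ∨ ∀ x : Fin n, blue x = true →
        ¬ (min (A.pos (t+1) (γ t)) (A.pos (t+1) (γ (t+1))) < A.pos (t+1) x ∧
           A.pos (t+1) x < max (A.pos (t+1) (γ t)) (A.pos (t+1) (γ (t+1)))))
   ∨ ((∀ t : ℤ, blue (γ t) = false) ∧ (∀ t : ℤ, A.cweight blue γ t ≤ δ) ∧
      ∀ t : ℤ, γ (t + 1) = γ t ∨ ∀ x : Fin n, blue x = false →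
        ¬ (min (A.pos (t+1) (γ t)) (A.pos (t+1) (γ (t+1))) < A.pos (t+1) x ∧
           A.pos (t+1) x < max (A.pos (t+1) (γ t)) (A.pos (t+1) (γ (t+1))))))

/-- `Γ` is `⪯`-maximal among all borders: it is a border and no border lies strictly
to its right. -/
def IsMaxBorder (A : AllowableSeq n) (blue : Fin n → Bool) (δ : ℤ) (Γ : ℤ → Fin n) : Prop :=
  A.IsBorder blue δ Γ ∧
  ∀ γ : ℤ → Fin n, A.IsBorder blue δ γ → ¬ (∀ t : ℤ, A.pos t (Γ t) < A.pos t (γ t))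

/-- The curve `α` has the weight change `a ⇝ b` between the curves `lo` and `hi`:
at some time `t` its weight changes from `a` to `b`, the change occurring to the right
of `lo` and to the left of `hi`. -/
def HasChangeBetween (A : AllowableSeq n) (blue : Fin n → Bool) (a b : ℤ)
    (α lo hi : ℤ → Fin n) : Prop :=
  ∃ t : ℤ, A.cweight blue α t = a ∧ A.cweight blue α (t+1) = b ∧
    A.pos t (lo t) ≤ A.pos t (α t) ∧ A.pos (t+1) (lo (t+1)) < A.pos (t+1) (α (t+1)) ∧
    A.pos t (α t) ≤ A.pos t (hi t) ∧ A.pos (t+1) (α (t+1)) < A.pos (t+1) (hi (t+1))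

/-- The number of blue points strictly to the left of the adjacent pair `p, q` in `π^t`. -/
def blueLeftPair (A : AllowableSeq n) (blue : Fin n → Bool) (t : ℤ) (p q : Fin n) : ℕ :=
  (Finset.univ.filter (fun y => blue y = true ∧
    (A.pos t y : ℕ) < min (A.pos t p : ℕ) (A.pos t q : ℕ))).card

end AllowableSeq

open AllowableSeq

private lemma kth_mono {n : ℕ} (P : Equiv.Perm (Fin n)) (F : Finset (Fin n)) {x y : Fin n}
    (hx : x ∈ F) (h : P x < P y) :
    (F.filter fun z => P z < P x).card < (F.filter fun z => P z < P y).card := by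
  apply Finset.card_lt_card
  rw [Finset.ssubset_def]
  constructor
  · intro z hz
    simp only [Finset.mem_filter] at *
    exact ⟨hz.1, hz.2.trans h⟩
  · intro hsub
    have := hsub (Finset.mem_filter.mpr ⟨hx, h⟩)
    exact absurd (Finset.mem_filter.mp this).2 (lt_irrefl _)

private lemma kth_unique {n : ℕ} (P : Equiv.Perm (Fin n)) (F : Finset (Fin n)) {x y : Fin n}
    (hx : x ∈ F) (hy : y ∈ F)
    (h : (F.filter fun z => P z < P x).card = (F.filter fun z => P z < P y).card) : x = y := by
  by_contra hxy
  have hne : P x ≠ P y := fun h' => hxy (P.injective h')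
  rcases hne.lt_or_gt with hlt | hlt
  · exact absurd h (Nat.ne_of_lt (kth_mono P F hx hlt))
  · exact absurd h.symm (Nat.ne_of_lt (kth_mono P F hy hlt))


theorem down_change_detects (n b r δ : ℕ) (A : AllowableSeq n) (blue : Fin n → Bool)
    (hn : n = b + r)
    (hb : (Finset.univ.filter (fun x => blue x = true)).card = b)
    (hr : (Finset.univ.filter (fun x => blue x = false)).card = r)
    (hbr : b = r + 2 * δ)
    (F : Finset (Fin n)) (hF : ∀ x ∈ F, blue x = true)
    (k : ℕ) (hk1 : 1 ≤ k) (hk2 : k ≤ F.card)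
    (γ : ℤ → Fin n) (hγ : A.IsKth F k γ) (t : ℤ)
    (h1 : A.cweight blue γ t = (δ : ℤ)) (h2 : A.cweight blue γ (t+1) = (δ : ℤ) - 1) :
    ∃ f x : Fin n, f ∈ F ∧ x ∉ F ∧ A.SwapsAt t f x ∧
      (((A.pos t x : ℕ) = (A.pos t f : ℕ) + 1 ∧ blue x = false ∧
          A.BalancedSwap blue (δ : ℤ) t f x ∧
          (F.filter (fun y =>
            (A.pos t y : ℕ) < min (A.pos t f : ℕ) (A.pos t x : ℕ))).card = k - 1) ∨
       ((A.pos t f : ℕ) = (A.pos t x : ℕ) + 1 ∧ blue x = true)) := by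
  obtain ⟨p, q, hadj, heq⟩ := A.adj t
  have hpq : p ≠ q := by
    intro h; rw [h] at hadj; omega
  have hP' : ∀ x, A.pos (t+1) x = A.pos t (Equiv.swap p q x) := by
    intro x; rw [heq]; rfl
  have hσσ : ∀ x, Equiv.swap p q (Equiv.swap p q x) = x := fun x => Equiv.swap_apply_self p q x
  have hσp : Equiv.swap p q p = q := Equiv.swap_apply_left p q
  have hσq : Equiv.swap p q q = p := Equiv.swap_apply_right p q
  have hfF : γ t ∈ F := (hγ t).1
  have hgF : γ (t+1) ∈ F := (hγ (t+1)).1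
  have hcard_t := (hγ t).2
  have hcard_t1 := (hγ (t+1)).2
  have hinj : ∀ x y : Fin n, (A.pos t x : ℕ) = (A.pos t y : ℕ) → x = y :=
    fun x y h => (A.pos t).injective (Fin.val_injective h)
  have L1 : ∀ c : Fin n, (∑ x : Fin n, if A.pos t (Equiv.swap p q x) < c then wt blue x else 0)
      = ∑ x : Fin n, if A.pos t x < c then wt blue (Equiv.swap p q x) else 0 := by
    intro c
    rw [← Equiv.sum_comp (Equiv.swap p q)
      (fun x => if A.pos t x < c then wt blue (Equiv.swap p q x) else 0)]
    exact Finset.sum_congr rfl fun x _ => by rw [hσσ]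
  have L2 : ∀ v : Fin n → ℤ, (∑ x : Fin n, if A.pos t x < A.pos t q then v x else 0)
      = (∑ x : Fin n, if A.pos t x < A.pos t p then v x else 0) + v p := by
    intro v
    have key : ∀ x : Fin n, (if A.pos t x < A.pos t q then v x else 0)
        = (if A.pos t x < A.pos t p then v x else 0) + (if x = p then v x else 0) := by
      intro x
      by_cases hx : x = p
      · subst hx
        rw [if_pos (show A.pos t x < A.pos t q by rw [Fin.lt_def]; omega),
          if_neg (lt_irrefl _), if_pos rfl, zero_add]
      · have hne : (A.pos t x : ℕ) ≠ (A.pos t p : ℕ) := fun h => hx (hinj _ _ h)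
        rw [if_neg hx, add_zero]
        exact if_congr (by rw [Fin.lt_def, Fin.lt_def]; omega) rfl rfl
    rw [Finset.sum_congr rfl fun x _ => key x, Finset.sum_add_distrib]
    congr 1
    simp
  by_cases hfp : γ t = p
  · by_cases hqF : q ∈ F
    · -- f = p moves right past q ∈ F : impossible
      exfalso
      have hfq_filt : (F.filter fun z => A.pos (t+1) z < A.pos (t+1) q)
          = F.filter fun z => A.pos t z < A.pos t (γ t) := by
        refine Finset.filter_congr fun x _ => ?_
        rw [hfp, hP' x, hP' q, hσq]
        by_cases hxp : x = p
        · subst hxp; rw [hσp, Fin.lt_def, Fin.lt_def]; omega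
        by_cases hxq : x = q
        · subst hxq; rw [hσq, Fin.lt_def, Fin.lt_def]; omega
        · rw [Equiv.swap_apply_of_ne_of_ne hxp hxq]
      have hg : γ (t+1) = q :=
        kth_unique (A.pos (t+1)) F hgF hqF (by rw [hcard_t1, hfq_filt, hcard_t])
      have hcw : A.cweight blue γ (t+1) = A.cweight blue γ t := by
        simp only [cweight, hg, hfp]
        refine Finset.sum_congr rfl fun x _ => ?_
        rw [hP' x, hP' q, hσq]
        refine if_congr ?_ rfl rfl
        by_cases hxp : x = p
        · subst hxp; rw [hσp, Fin.lt_def, Fin.lt_def]; omega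
        by_cases hxq : x = q
        · subst hxq; rw [hσq, Fin.lt_def, Fin.lt_def]; omega
        · rw [Equiv.swap_apply_of_ne_of_ne hxp hxq]
      rw [h1, h2] at hcw
      omega
    · -- f = p moves right past q ∉ F
      have hpF : p ∈ F := hfp ▸ hfF
      have hpfilt : (F.filter fun z => A.pos (t+1) z < A.pos (t+1) p)
          = F.filter fun z => A.pos t z < A.pos t (γ t) := by
        refine Finset.filter_congr fun x hxF => ?_
        rw [hfp, hP' x, hP' p, hσp]
        by_cases hxp : x = p
        · subst hxp; rw [hσp, Fin.lt_def, Fin.lt_def]; omega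
        · have hxq : x ≠ q := fun h => hqF (h ▸ hxF)
          rw [Equiv.swap_apply_of_ne_of_ne hxp hxq, Fin.lt_def, Fin.lt_def]
          have hne : (A.pos t x : ℕ) ≠ (A.pos t p : ℕ) := fun h => hxp (hinj _ _ h)
          omega
      have hg : γ (t+1) = p :=
        kth_unique (A.pos (t+1)) F hgF hpF (by rw [hcard_t1, hpfilt, hcard_t])
      have hcw : A.cweight blue γ (t+1) = A.cweight blue γ t + wt blue q := by
        simp only [cweight, hg, hfp]
        rw [show (∑ x : Fin n, if A.pos (t+1) x < A.pos (t+1) p then wt blue x else 0)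
            = ∑ x : Fin n, if A.pos t (Equiv.swap p q x) < A.pos t q then wt blue x else 0 from
          Finset.sum_congr rfl fun x _ => by rw [hP' x, hP' p, hσp]]
        rw [L1 (A.pos t q), L2 (fun x => wt blue (Equiv.swap p q x)), hσp]
        congr 1
        refine Finset.sum_congr rfl fun x _ => ?_
        by_cases hc : A.pos t x < A.pos t p
        · rw [if_pos hc, if_pos hc]
          have hxp : x ≠ p := fun h => absurd hc (by rw [h]; exact lt_irrefl _)
          have hxq : x ≠ q := fun h => by rw [h, Fin.lt_def] at hc; omega
          rw [Equiv.swap_apply_of_ne_of_ne hxp hxq]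
        · rw [if_neg hc, if_neg hc]
      rw [h1, h2] at hcw
      have hwq : wt blue q = -1 := by omega
      have hbq : blue q = false := by
        rcases Bool.eq_false_or_eq_true (blue q) with h | h
        · simp [wt, h] at hwq
        · exact h
      have hbp : blue p = true := hF p hpF
      refine ⟨p, q, hpF, hqF, ⟨hpq, heq⟩,
        Or.inl ⟨hadj, hbq, ⟨⟨hpq, heq⟩, by simp [hbp, hbq], ?_⟩, ?_⟩⟩
      · rw [← h1]
        simp only [cweight, hfp]
        refine Finset.sum_congr rfl fun x _ => if_congr ?_ rfl rfl
        rw [Fin.lt_def]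
        omega
      · rw [← hcard_t]
        refine congrArg Finset.card (Finset.filter_congr fun x _ => ?_)
        rw [hfp, Fin.lt_def]
        omega
  · by_cases hfq : γ t = q
    · by_cases hpF : p ∈ F
      · -- f = q moves left past p ∈ F : impossible
        exfalso
        have hqF : q ∈ F := hfq ▸ hfF
        have hFinv : ∀ y, Equiv.swap p q y ∈ F ↔ y ∈ F := by
          intro y
          by_cases hyp : y = p
          · subst hyp; rw [hσp]; exact ⟨fun _ => hpF, fun _ => hqF⟩
          by_cases hyq : y = q
          · subst hyq; rw [hσq]; exact ⟨fun _ => hqF, fun _ => hpF⟩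
          · rw [Equiv.swap_apply_of_ne_of_ne hyp hyq]
        have hfilt : (F.filter fun z => A.pos (t+1) z < A.pos (t+1) p)
            = (F.filter fun z => A.pos t z < A.pos t (γ t)).image (Equiv.swap p q) := by
          ext y
          simp only [Finset.mem_filter, Finset.mem_image]
          constructor
          · rintro ⟨hyF, hlt⟩
            refine ⟨Equiv.swap p q y, ⟨(hFinv y).mpr hyF, ?_⟩, hσσ y⟩
            rw [hP' y, hP' p, hσp] at hlt
            rw [hfq]
            exact hlt
          · rintro ⟨x, ⟨hxF, hlt⟩, rfl⟩
            refine ⟨(hFinv x).mpr hxF, ?_⟩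
            rw [hP' (Equiv.swap p q x), hP' p, hσp, hσσ]
            rw [hfq] at hlt
            exact hlt
        have hg : γ (t+1) = p := by
          refine kth_unique (A.pos (t+1)) F hgF hpF ?_
          rw [hcard_t1, hfilt, Finset.card_image_of_injective _ (Equiv.injective _), hcard_t]
        have hwσ : ∀ x, wt blue (Equiv.swap p q x) = wt blue x := by
          intro x
          have hbp := hF p hpF
          have hbq := hF q hqF
          by_cases hxp : x = p
          · subst hxp; rw [hσp]; simp [wt, hbp, hbq]
          by_cases hxq : x = q
          · subst hxq; rw [hσq]; simp [wt, hbp, hbq]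
          · rw [Equiv.swap_apply_of_ne_of_ne hxp hxq]
        have hcw : A.cweight blue γ (t+1) = A.cweight blue γ t := by
          simp only [cweight, hg, hfq]
          rw [show (∑ x : Fin n, if A.pos (t+1) x < A.pos (t+1) p then wt blue x else 0)
              = ∑ x : Fin n, if A.pos t (Equiv.swap p q x) < A.pos t q then wt blue x else 0 from
            Finset.sum_congr rfl fun x _ => by rw [hP' x, hP' p, hσp]]
          rw [L1 (A.pos t q)]
          exact Finset.sum_congr rfl fun x _ => by rw [hwσ]
        rw [h1, h2] at hcw
        omega
      · -- f = q moves left past p ∉ F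
        have hqF : q ∈ F := hfq ▸ hfF
        have hqfilt : (F.filter fun z => A.pos (t+1) z < A.pos (t+1) q)
            = F.filter fun z => A.pos t z < A.pos t (γ t) := by
          refine Finset.filter_congr fun x hxF => ?_
          rw [hfq, hP' x, hP' q, hσq]
          by_cases hxq : x = q
          · subst hxq; rw [hσq, Fin.lt_def, Fin.lt_def]; omega
          · have hxp : x ≠ p := fun h => hpF (h ▸ hxF)
            rw [Equiv.swap_apply_of_ne_of_ne hxp hxq, Fin.lt_def, Fin.lt_def]
            have hne : (A.pos t x : ℕ) ≠ (A.pos t p : ℕ) := fun h => hxp (hinj _ _ h)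
            omega
        have hg : γ (t+1) = q :=
          kth_unique (A.pos (t+1)) F hgF hqF (by rw [hcard_t1, hqfilt, hcard_t])
        have hcw : A.cweight blue γ (t+1) = A.cweight blue γ t - wt blue p := by
          simp only [cweight, hg, hfq]
          rw [show (∑ x : Fin n, if A.pos (t+1) x < A.pos (t+1) q then wt blue x else 0)
              = ∑ x : Fin n, if A.pos t (Equiv.swap p q x) < A.pos t p then wt blue x else 0 from
            Finset.sum_congr rfl fun x _ => by rw [hP' x, hP' q, hσq]]
          rw [L1 (A.pos t p), L2 (wt blue), add_sub_cancel_right]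
          refine Finset.sum_congr rfl fun x _ => ?_
          by_cases hc : A.pos t x < A.pos t p
          · rw [if_pos hc, if_pos hc]
            have hxp : x ≠ p := fun h => absurd hc (by rw [h]; exact lt_irrefl _)
            have hxq : x ≠ q := fun h => by rw [h, Fin.lt_def] at hc; omega
            rw [Equiv.swap_apply_of_ne_of_ne hxp hxq]
          · rw [if_neg hc, if_neg hc]
        rw [h1, h2] at hcw
        have hwp : wt blue p = 1 := by omega
        have hbp : blue p = true := by
          rcases Bool.eq_false_or_eq_true (blue p) with h | h
          · exact h
          · simp [wt, h] at hwp
        refine ⟨q, p, hqF, hpF, ⟨hpq.symm, ?_⟩, Or.inr ⟨hadj, hbp⟩⟩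
        rw [Equiv.swap_comm]
        exact heq
    · -- γ t ∉ {p, q} : impossible
      exfalso
      have hσf : Equiv.swap p q (γ t) = γ t := Equiv.swap_apply_of_ne_of_ne hfp hfq
      have hnep : (A.pos t (γ t) : ℕ) ≠ (A.pos t p : ℕ) := fun h => hfp (hinj _ _ h)
      have hneq : (A.pos t (γ t) : ℕ) ≠ (A.pos t q : ℕ) := fun h => hfq (hinj _ _ h)
      have hcond : ∀ x : Fin n,
          (A.pos (t+1) x < A.pos (t+1) (γ t)) ↔ (A.pos t x < A.pos t (γ t)) := by
        intro x
        rw [hP' x, hP' (γ t), hσf]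
        by_cases hxp : x = p
        · subst hxp; rw [hσp, Fin.lt_def, Fin.lt_def]; omega
        by_cases hxq : x = q
        · subst hxq; rw [hσq, Fin.lt_def, Fin.lt_def]; omega
        · rw [Equiv.swap_apply_of_ne_of_ne hxp hxq]
      have hg : γ (t+1) = γ t := by
        refine kth_unique (A.pos (t+1)) F hgF hfF ?_
        rw [hcard_t1, Finset.filter_congr fun x (_ : x ∈ F) => hcond x, hcard_t]
      have hcw : A.cweight blue γ (t+1) = A.cweight blue γ t := by
        simp only [cweight, hg]
        exact Finset.sum_congr rfl fun x _ => if_congr (hcond x) rfl rfl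
      rw [h1, h2] at hcw
      omega
end

section
/- Let k be an integer with δ+1 ≤ k ≤ ⌊b/2⌋, and suppose that the curve B_k is δ-changing. Then there are at least two distinct balanced transpositions (i.e., at least two distinct unordered pairs of points swapped by balanced transpositions of Π) each of which has exactly k−1 blue points strictly to the left of the transposed pair at the time of the transposition. -/
open Finset

open AllowableSeq

namespace TB

variable {n : ℕ}

/-- generic partial sum up to position `c` -/
def S {M : Type} [AddCommMonoid M] (A : AllowableSeq n) (t : ℤ) (c : ℕ) (f : Fin n → M) : M :=
  ∑ x : Fin n, if (A.pos t x : ℕ) < c then f x else 0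

def fb (blue : Fin n → Bool) : Fin n → ℕ := fun x => if blue x = true then 1 else 0

lemma pos_val_inj (A : AllowableSeq n) (t : ℤ) {x y : Fin n}
    (h : (A.pos t x : ℕ) = (A.pos t y : ℕ)) : x = y :=
  (A.pos t).injective (Fin.val_injective h)

lemma S_point {M : Type} [AddCommMonoid M] (A : AllowableSeq n) (t : ℤ) (y : Fin n)
    (f : Fin n → M) :
    S A t ((A.pos t y : ℕ) + 1) f = S A t (A.pos t y : ℕ) f + f y := by
  unfold S
  have hy : f y = ∑ x : Fin n, if x = y then f x else 0 := by simp
  rw [hy, ← Finset.sum_add_distrib]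
  refine Finset.sum_congr rfl fun x _ => ?_
  by_cases hx : x = y
  · subst hx
    simp
  · have : (A.pos t x : ℕ) ≠ (A.pos t y : ℕ) := fun h => hx (pos_val_inj A t h)
    rw [if_neg hx]
    by_cases h1 : (A.pos t x : ℕ) < (A.pos t y : ℕ)
    · rw [if_pos (by omega), if_pos h1, add_zero]
    · rw [if_neg (by omega), if_neg h1, add_zero]

lemma S_mono (A : AllowableSeq n) (t : ℤ) (f : Fin n → ℕ) {c c' : ℕ} (h : c ≤ c') :
    S A t c f ≤ S A t c' f := by
  refine Finset.sum_le_sum fun x _ => ?_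
  by_cases h1 : (A.pos t x : ℕ) < c
  · rw [if_pos h1, if_pos (lt_of_lt_of_le h1 h)]
  · rw [if_neg h1]; positivity

section Step

variable (A : AllowableSeq n) {t : ℤ} {p q : Fin n}

lemma pos_succ_val (hstep : A.pos (t + 1) = (Equiv.swap p q).trans (A.pos t)) (x : Fin n) :
    (A.pos (t + 1) x : ℕ) =
      if x = p then (A.pos t q : ℕ) else if x = q then (A.pos t p : ℕ) else (A.pos t x : ℕ) := by
  rw [hstep, Equiv.trans_apply]
  by_cases hx : x = p
  · subst hx; rw [if_pos rfl, Equiv.swap_apply_left]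
  · by_cases hx' : x = q
    · subst hx'; rw [if_neg hx, if_pos rfl, Equiv.swap_apply_right]
    · rw [if_neg hx, if_neg hx', Equiv.swap_apply_of_ne_of_ne hx hx']

lemma Sa {M : Type} [AddCommMonoid M]
    (hadj : (A.pos t q : ℕ) = (A.pos t p : ℕ) + 1)
    (hstep : A.pos (t + 1) = (Equiv.swap p q).trans (A.pos t))
    {c : ℕ} (hc : c ≠ (A.pos t p : ℕ) + 1) (f : Fin n → M) :
    S A (t + 1) c f = S A t c f := by
  refine Finset.sum_congr rfl fun x _ => ?_
  rw [pos_succ_val A hstep x]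
  by_cases hx : x = p
  · subst hx
    rw [if_pos rfl]
    congr 1
    simp only [eq_iff_iff]
    omega
  · by_cases hx' : x = q
    · subst hx'
      rw [if_neg hx, if_pos rfl]
      congr 1
      simp only [eq_iff_iff]
      omega
    · rw [if_neg hx, if_neg hx']

lemma Sb {M : Type} [AddCommMonoid M]
    (hadj : (A.pos t q : ℕ) = (A.pos t p : ℕ) + 1)
    (hstep : A.pos (t + 1) = (Equiv.swap p q).trans (A.pos t)) (f : Fin n → M) :
    S A (t + 1) ((A.pos t p : ℕ) + 1) f + f p = S A t ((A.pos t p : ℕ) + 1) f + f q := by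
  have hpq : p ≠ q := by
    intro h; rw [h] at hadj; omega
  unfold S
  have hp : f p = ∑ x : Fin n, if x = p then f x else 0 := by simp
  have hq : f q = ∑ x : Fin n, if x = q then f x else 0 := by simp
  rw [hp, hq, ← Finset.sum_add_distrib, ← Finset.sum_add_distrib]
  refine Finset.sum_congr rfl fun x _ => ?_
  rw [pos_succ_val A hstep x]
  by_cases hx : x = p
  · subst hx
    rw [if_pos rfl, if_pos rfl, if_neg hpq, if_neg (by omega), if_pos (by omega), zero_add,
      add_zero]
  · by_cases hx' : x = q
    · subst hx'
      rw [if_neg hx, if_pos rfl, if_pos rfl, if_neg hx, if_pos (by omega), if_neg (by omega),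
        add_zero, zero_add]
    · have h1 : (A.pos t x : ℕ) ≠ (A.pos t p : ℕ) := fun h => hx (pos_val_inj A t h)
      rw [if_neg hx, if_neg hx', if_neg hx, if_neg hx']

end Step

section Mid

variable {n : ℕ} (A : AllowableSeq n) (blue : Fin n → Bool) (k : ℕ) (γ : ℤ → Fin n)

lemma card_filter_eq_S (t : ℤ) (y : Fin n) :
    ((Finset.univ.filter (fun x => blue x = true)).filter
      (fun x => A.pos t x < A.pos t y)).card = S A t (A.pos t y : ℕ) (fb blue) := by
  rw [Finset.filter_filter, Finset.card_filter]
  unfold S fb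
  refine Finset.sum_congr rfl fun x _ => ?_
  by_cases hb : blue x = true <;>
    by_cases hp : (A.pos t x : ℕ) < (A.pos t y : ℕ) <;>
    simp [hb, hp, Fin.lt_def]

lemma card_blue_lt (t : ℤ) (c : ℕ) :
    (Finset.univ.filter (fun y => blue y = true ∧ (A.pos t y : ℕ) < c)).card
      = S A t c (fb blue) := by
  rw [Finset.card_filter]
  unfold S fb
  refine Finset.sum_congr rfl fun x _ => ?_
  by_cases hb : blue x = true <;> by_cases hp : (A.pos t x : ℕ) < c <;> simp [hb, hp]

lemma cweight_eq_S (t : ℤ) :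
    A.cweight blue γ t = S A t (A.pos t (γ t) : ℕ) (wt blue) := by
  unfold AllowableSeq.cweight S
  refine Finset.sum_congr rfl fun x _ => ?_
  simp only [Fin.lt_def]

variable {k γ}

lemma gamma_unique_S (hγ : A.IsKth (Finset.univ.filter (fun x => blue x = true)) k γ)
    (hk : 1 ≤ k) (t : ℤ) (y : Fin n) (hy : blue y = true)
    (hS : S A t (A.pos t y : ℕ) (fb blue) = k - 1) : y = γ t := by
  have hγt := hγ t
  have hgb : blue (γ t) = true := (Finset.mem_filter.1 hγt.1).2
  have hγS : S A t (A.pos t (γ t) : ℕ) (fb blue) = k - 1 := by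
    rw [← card_filter_eq_S]; exact hγt.2
  rcases lt_trichotomy ((A.pos t y : ℕ)) ((A.pos t (γ t) : ℕ)) with h | h | h
  · have h2 : S A t ((A.pos t y : ℕ) + 1) (fb blue) ≤ S A t (A.pos t (γ t) : ℕ) (fb blue) :=
      S_mono A t (fb blue) (by omega)
    rw [S_point] at h2
    have hy1 : fb blue y = 1 := by simp [fb, hy]
    omega
  · exact pos_val_inj A t h
  · have h2 : S A t ((A.pos t (γ t) : ℕ) + 1) (fb blue) ≤ S A t (A.pos t y : ℕ) (fb blue) :=
      S_mono A t (fb blue) (by omega)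
    rw [S_point] at h2
    have hy1 : fb blue (γ t) = 1 := by simp [fb, hgb]
    omega

lemma master (hγ : A.IsKth (Finset.univ.filter (fun x => blue x = true)) k γ)
    (hk : 1 ≤ k) (t : ℤ) :
    A.cweight blue γ (t + 1) = A.cweight blue γ t ∨
    (∃ x : Fin n, blue x = false ∧ (A.pos t x : ℕ) + 1 = (A.pos t (γ t) : ℕ) ∧
      A.pos (t + 1) = (Equiv.swap x (γ t)).trans (A.pos t) ∧
      A.cweight blue γ (t + 1) = A.cweight blue γ t + 1) ∨
    (∃ x : Fin n, blue x = false ∧ (A.pos t x : ℕ) = (A.pos t (γ t) : ℕ) + 1 ∧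
      A.pos (t + 1) = (Equiv.swap (γ t) x).trans (A.pos t) ∧
      A.cweight blue γ (t + 1) = A.cweight blue γ t - 1) := by
  obtain ⟨p, q, hadj, hstep⟩ := A.adj t
  have hpq : p ≠ q := fun h => by rw [h] at hadj; omega
  have hgb : blue (γ t) = true := (Finset.mem_filter.1 (hγ t).1).2
  have hγS : S A t (A.pos t (γ t) : ℕ) (fb blue) = k - 1 := by
    rw [← card_filter_eq_S]; exact (hγ t).2
  have hcw : A.cweight blue γ t = S A t (A.pos t (γ t) : ℕ) (wt blue) := cweight_eq_S A blue γ t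
  have hcw' : A.cweight blue γ (t + 1)
      = S A (t + 1) (A.pos (t + 1) (γ (t + 1)) : ℕ) (wt blue) := cweight_eq_S A blue γ (t + 1)
  by_cases hgp : γ t = p
  · subst hgp
    by_cases hq : blue q = true
    · -- blue-blue swap, γ t on the left: γ(t+1) = q, cweight unchanged
      left
      have hv : (A.pos (t + 1) q : ℕ) = (A.pos t (γ t) : ℕ) := by
        rw [pos_succ_val A hstep]; simp [Ne.symm hpq]
      have hSa1 := Sa A hadj hstep (c := (A.pos t (γ t) : ℕ)) (by omega) (fb blue)
      have hSa2 := Sa A hadj hstep (c := (A.pos t (γ t) : ℕ)) (by omega) (wt blue)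
      have hSfb : S A (t + 1) (A.pos (t + 1) q : ℕ) (fb blue) = k - 1 := by
        rw [hv, hSa1]; exact hγS
      have hg' : q = γ (t + 1) := gamma_unique_S A blue hγ hk (t + 1) q hq hSfb
      rw [hcw', ← hg', hv, hSa2, hcw]
    · -- γ t blue, red q to its right: red moves left, cweight decreases
      right; right
      refine ⟨q, by simpa using hq, hadj, hstep, ?_⟩
      have hv : (A.pos (t + 1) (γ t) : ℕ) = (A.pos t (γ t) : ℕ) + 1 := by
        rw [pos_succ_val A hstep]; simp [hadj]
      have hSb := Sb A hadj hstep (fb blue)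
      have hSp := S_point A t (γ t) (fb blue)
      have hfbg : fb blue (γ t) = 1 := by simp [fb, hgb]
      have hfbq : fb blue q = 0 := by simp [fb, hq]
      have hSfb : S A (t + 1) (A.pos (t + 1) (γ t) : ℕ) (fb blue) = k - 1 := by
        rw [hv]; omega
      have hg' : γ t = γ (t + 1) := gamma_unique_S A blue hγ hk (t + 1) (γ t) hgb hSfb
      have hSbw := Sb A hadj hstep (wt blue)
      have hSpw := S_point A t (γ t) (wt blue)
      have hwg : wt blue (γ t) = 1 := by simp [wt, hgb]
      have hwq : wt blue q = -1 := by simp [wt, hq]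
      rw [hcw', ← hg', hv, hcw]
      omega
  · by_cases hgq : γ t = q
    · subst hgq
      by_cases hp : blue p = true
      · -- blue-blue swap, γ t on the right: γ(t+1) = p, cweight unchanged
        left
        have hv : (A.pos (t + 1) p : ℕ) = (A.pos t (γ t) : ℕ) := by
          rw [pos_succ_val A hstep]; simp
        have hSb := Sb A hadj hstep (fb blue)
        have hfbg : fb blue (γ t) = 1 := by simp [fb, hgb]
        have hfbp : fb blue p = 1 := by simp [fb, hp]
        have hSfb : S A (t + 1) (A.pos (t + 1) p : ℕ) (fb blue) = k - 1 := by
          rw [hv]; rw [hadj] at hγS ⊢; omega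
        have hg' : p = γ (t + 1) := gamma_unique_S A blue hγ hk (t + 1) p hp hSfb
        have hSbw := Sb A hadj hstep (wt blue)
        have hwg : wt blue (γ t) = 1 := by simp [wt, hgb]
        have hwp : wt blue p = 1 := by simp [wt, hp]
        rw [hcw', ← hg', hv, hcw]
        rw [hadj]
        omega
      · -- red p immediately left of γ t: red moves right, cweight increases
        right; left
        refine ⟨p, by simpa using hp, by omega, hstep, ?_⟩
        have hv : (A.pos (t + 1) (γ t) : ℕ) = (A.pos t p : ℕ) := by
          rw [pos_succ_val A hstep]; simp [hgp]
        have hSa1 := Sa A hadj hstep (c := (A.pos t p : ℕ)) (by omega) (fb blue)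
        have hSa2 := Sa A hadj hstep (c := (A.pos t p : ℕ)) (by omega) (wt blue)
        have hSp := S_point A t p (fb blue)
        have hfbp : fb blue p = 0 := by simp [fb, hp]
        have hSfb : S A (t + 1) (A.pos (t + 1) (γ t) : ℕ) (fb blue) = k - 1 := by
          rw [hv, hSa1]; rw [hadj] at hγS; omega
        have hg' : γ t = γ (t + 1) := gamma_unique_S A blue hγ hk (t + 1) (γ t) hgb hSfb
        have hSpw := S_point A t p (wt blue)
        have hwp : wt blue p = -1 := by simp [wt, hp]
        rw [hcw', ← hg', hv, hSa2]
        rw [hadj] at hcw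
        omega
    · -- γ t not involved: cweight unchanged
      left
      have hv : (A.pos (t + 1) (γ t) : ℕ) = (A.pos t (γ t) : ℕ) := by
        rw [pos_succ_val A hstep]; simp [hgp, hgq]
      have hne : (A.pos t (γ t) : ℕ) ≠ (A.pos t q : ℕ) := fun h => hgq (pos_val_inj A t h)
      have hSa1 := Sa A hadj hstep (c := (A.pos t (γ t) : ℕ)) (by omega) (fb blue)
      have hSa2 := Sa A hadj hstep (c := (A.pos t (γ t) : ℕ)) (by omega) (wt blue)
      have hSfb : S A (t + 1) (A.pos (t + 1) (γ t) : ℕ) (fb blue) = k - 1 := by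
        rw [hv, hSa1]; exact hγS
      have hg' : γ t = γ (t + 1) := gamma_unique_S A blue hγ hk (t + 1) (γ t) hgb hSfb
      rw [hcw', ← hg', hv, hSa2, hcw]

end Mid
section Per

variable {n : ℕ} (A : AllowableSeq n)

lemma pos_rev_apply (t : ℤ) (x : Fin n) :
    A.pos (t + (n.choose 2 : ℤ)) x = (A.pos t x).rev := by
  rw [A.rev t]; rfl

lemma pos_two_period (t : ℤ) : A.pos (t + 2 * (n.choose 2 : ℤ)) = A.pos t := by
  have h : t + 2 * (n.choose 2 : ℤ) = t + (n.choose 2 : ℤ) + (n.choose 2 : ℤ) := by ring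
  rw [h, A.rev, A.rev]
  ext x
  simp [Equiv.trans_apply, Fin.rev_rev]

lemma pos_two_period_zsmul (m : ℤ) (t : ℤ) :
    A.pos (t + 2 * (n.choose 2 : ℤ) * m) = A.pos t := by
  induction m using Int.induction_on with
  | zero => simp
  | succ i ih =>
    have e : t + 2 * (n.choose 2 : ℤ) * ((i : ℤ) + 1)
        = (t + 2 * (n.choose 2 : ℤ) * (i : ℤ)) + 2 * (n.choose 2 : ℤ) := by ring
    rw [e, pos_two_period, ih]
  | pred i ih =>
    have e : t + 2 * (n.choose 2 : ℤ) * (-(i : ℤ) - 1) + 2 * (n.choose 2 : ℤ)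
        = t + 2 * (n.choose 2 : ℤ) * (-(i : ℤ)) := by ring
    rw [← pos_two_period A (t + 2 * (n.choose 2 : ℤ) * (-(i : ℤ) - 1)), e, ih]

lemma sw_shiftC {t : ℤ} {g x : Fin n}
    (h : A.pos (t + 1) = (Equiv.swap g x).trans (A.pos t)) :
    A.pos (t + (n.choose 2 : ℤ) + 1) = (Equiv.swap g x).trans (A.pos (t + (n.choose 2 : ℤ))) := by
  have h1 : t + (n.choose 2 : ℤ) + 1 = (t + 1) + (n.choose 2 : ℤ) := by ring
  rw [h1, A.rev, h, A.rev, Equiv.trans_assoc]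

lemma sw_shiftC_neg {t : ℤ} {g x : Fin n}
    (h : A.pos (t + 1) = (Equiv.swap g x).trans (A.pos t)) :
    A.pos (t - (n.choose 2 : ℤ) + 1)
      = (Equiv.swap g x).trans (A.pos (t - (n.choose 2 : ℤ))) := by
  have h1 := sw_shiftC A h
  have e1 : t - (n.choose 2 : ℤ) + 1 + 2 * (n.choose 2 : ℤ) = t + (n.choose 2 : ℤ) + 1 := by ring
  have e2 : t - (n.choose 2 : ℤ) + 2 * (n.choose 2 : ℤ) = t + (n.choose 2 : ℤ) := by ring
  rw [← pos_two_period A (t - (n.choose 2 : ℤ) + 1), e1, h1,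
    ← pos_two_period A (t - (n.choose 2 : ℤ)), e2]

lemma sw_shift_zsmul (m : ℤ) {t : ℤ} {g x : Fin n}
    (h : A.pos (t + 1) = (Equiv.swap g x).trans (A.pos t)) :
    A.pos (t + (n.choose 2 : ℤ) * m + 1)
      = (Equiv.swap g x).trans (A.pos (t + (n.choose 2 : ℤ) * m)) := by
  induction m using Int.induction_on with
  | zero => simpa using h
  | succ i ih =>
    have e : t + (n.choose 2 : ℤ) * ((i : ℤ) + 1)
        = (t + (n.choose 2 : ℤ) * (i : ℤ)) + (n.choose 2 : ℤ) := by ring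
    have := sw_shiftC A ih
    rw [e]
    convert this using 3 <;> ring
  | pred i ih =>
    have e : t + (n.choose 2 : ℤ) * (-(i : ℤ) - 1)
        = (t + (n.choose 2 : ℤ) * (-(i : ℤ))) - (n.choose 2 : ℤ) := by ring
    have := sw_shiftC_neg A ih
    rw [e]
    convert this using 3 <;> ring

noncomputable def stepPair (A : AllowableSeq n) (u : ℤ) : Sym2 (Fin n) :=
  s((A.adj u).choose, (A.adj u).choose_spec.choose)

lemma stepPair_def (u : ℤ) : ∃ p q : Fin n, stepPair A u = s(p, q) ∧
    (A.pos u q : ℕ) = (A.pos u p : ℕ) + 1 ∧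
    A.pos (u + 1) = (Equiv.swap p q).trans (A.pos u) :=
  ⟨(A.adj u).choose, (A.adj u).choose_spec.choose, rfl,
    (A.adj u).choose_spec.choose_spec.1, (A.adj u).choose_spec.choose_spec.2⟩

lemma sw_pair_unique (u : ℤ) {p q a b : Fin n} (hpq : p ≠ q) (hab : a ≠ b)
    (h1 : A.pos (u + 1) = (Equiv.swap p q).trans (A.pos u))
    (h2 : A.pos (u + 1) = (Equiv.swap a b).trans (A.pos u)) : s(p, q) = s(a, b) := by
  have hsw : ∀ y, Equiv.swap p q y = Equiv.swap a b y := by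
    intro y
    have h3 : A.pos u (Equiv.swap p q y) = A.pos u (Equiv.swap a b y) := by
      rw [← Equiv.trans_apply, ← Equiv.trans_apply, ← h1, ← h2]
    exact (A.pos u).injective h3
  have h3 := hsw a
  rw [Equiv.swap_apply_left] at h3
  by_cases hap : a = p
  · subst hap; rw [Equiv.swap_apply_left] at h3; rw [h3]
  · by_cases haq : a = q
    · subst haq; rw [Equiv.swap_apply_right] at h3; rw [h3]; exact Sym2.eq_swap
    · rw [Equiv.swap_apply_of_ne_of_ne hap haq] at h3; exact absurd h3 hab

lemma stepPair_eq (u : ℤ) {a b : Fin n} (hab : a ≠ b)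
    (h : A.pos (u + 1) = (Equiv.swap a b).trans (A.pos u)) : stepPair A u = s(a, b) := by
  obtain ⟨p, q, hs, hadj, hstep⟩ := stepPair_def A u
  have hpq : p ≠ q := fun hh => by rw [hh] at hadj; omega
  rw [hs]; exact sw_pair_unique A u hpq hab hstep h

lemma stepPair_not_diag (u : ℤ) : ¬ (stepPair A u).IsDiag := by
  obtain ⟨p, q, hs, hadj, hstep⟩ := stepPair_def A u
  have hpq : p ≠ q := fun hh => by rw [hh] at hadj; omega
  rw [hs]
  simpa using hpq

lemma flip_preserved {t : ℤ} {p q a b : Fin n}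
    (hadj : (A.pos t q : ℕ) = (A.pos t p : ℕ) + 1)
    (hstep : A.pos (t + 1) = (Equiv.swap p q).trans (A.pos t))
    (hab : a ≠ b) (hne : s(p, q) ≠ s(a, b)) :
    ((A.pos (t + 1) a : ℕ) < (A.pos (t + 1) b : ℕ) ↔ (A.pos t a : ℕ) < (A.pos t b : ℕ)) := by
  have hva := pos_succ_val A hstep a
  have hvb := pos_succ_val A hstep b
  have hinj : ∀ y z : Fin n, y ≠ z → (A.pos t y : ℕ) ≠ (A.pos t z : ℕ) :=
    fun y z h hh => h (pos_val_inj A t hh)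
  have hpq : p ≠ q := fun hh => by rw [hh] at hadj; omega
  by_cases hap : a = p
  · by_cases hbq : b = q
    · exact absurd (by rw [hap, hbq]) hne
    · have hbp : b ≠ p := fun hh => hab (hap.trans hh.symm)
      rw [hap] at hva ⊢
      rw [if_pos rfl] at hva
      rw [if_neg hbp, if_neg hbq] at hvb
      have h3 := hinj b p hbp
      have h4 := hinj b q hbq
      omega
  · by_cases haq : a = q
    · by_cases hbp : b = p
      · exact absurd (by rw [haq, hbp]; exact Sym2.eq_swap) hne
      · have hbq : b ≠ q := fun hh => hab (haq.trans hh.symm)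
        rw [haq] at hva ⊢
        rw [if_neg (Ne.symm hpq), if_pos rfl] at hva
        rw [if_neg hbp, if_neg hbq] at hvb
        have h3 := hinj b p hbp
        have h4 := hinj b q hbq
        omega
    · rw [if_neg hap, if_neg haq] at hva
      by_cases hbp : b = p
      · rw [hbp] at hvb ⊢
        rw [if_pos rfl] at hvb
        have h3 := hinj a p hap
        have h4 := hinj a q haq
        omega
      · by_cases hbq : b = q
        · rw [hbq] at hvb ⊢
          rw [if_neg (Ne.symm hpq), if_pos rfl] at hvb
          have h3 := hinj a p hap
          have h4 := hinj a q haq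
          omega
        · rw [if_neg hbp, if_neg hbq] at hvb
          omega

lemma window_surj (t : ℤ) {a b : Fin n} (hab : a ≠ b) :
    ∃ u ∈ Finset.Ico t (t + (n.choose 2 : ℤ)), stepPair A u = s(a, b) := by
  by_contra hno
  push_neg at hno
  have key : ∀ d : ℕ, (d : ℤ) ≤ (n.choose 2 : ℤ) →
      (((A.pos (t + (d : ℤ)) a : ℕ) < (A.pos (t + (d : ℤ)) b : ℕ))
        ↔ ((A.pos t a : ℕ) < (A.pos t b : ℕ))) := by
    intro d
    induction d with
    | zero => intro _; simp
    | succ d ih =>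
      intro hd
      have hd' : (d : ℤ) ≤ (n.choose 2 : ℤ) := by push_cast at hd ⊢; omega
      have hu : t + (d : ℤ) ∈ Finset.Ico t (t + (n.choose 2 : ℤ)) := by
        rw [Finset.mem_Ico]
        constructor
        · omega
        · push_cast at hd; omega
      obtain ⟨p, q, hs, hadj, hstep⟩ := stepPair_def A (t + (d : ℤ))
      have hpqab : s(p, q) ≠ s(a, b) := by rw [← hs]; exact hno _ hu
      have hflip := flip_preserved A hadj hstep hab hpqab
      have hcast : (t + ((d + 1 : ℕ) : ℤ)) = (t + (d : ℤ)) + 1 := by push_cast; ring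
      rw [hcast]
      exact hflip.trans (ih hd')
  have hfin := key (n.choose 2) (by simp)
  have hra := pos_rev_apply A t a
  have hrb := pos_rev_apply A t b
  rw [hra, hrb] at hfin
  have hne2 : (A.pos t a : ℕ) ≠ (A.pos t b : ℕ) := fun h => hab (pos_val_inj A t h)
  have hlta : (A.pos t a : ℕ) < n := (A.pos t a).isLt
  have hltb : (A.pos t b : ℕ) < n := (A.pos t b).isLt
  rw [Fin.val_rev, Fin.val_rev] at hfin
  omega

lemma once_per_window (t : ℤ) {a b : Fin n} (hab : a ≠ b) {u1 u2 : ℤ}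
    (h1 : u1 ∈ Finset.Ico t (t + (n.choose 2 : ℤ)))
    (h2 : u2 ∈ Finset.Ico t (t + (n.choose 2 : ℤ)))
    (e1 : A.pos (u1 + 1) = (Equiv.swap a b).trans (A.pos u1))
    (e2 : A.pos (u2 + 1) = (Equiv.swap a b).trans (A.pos u2)) : u1 = u2 := by
  have hcards : (Finset.Ico t (t + (n.choose 2 : ℤ))).card
      = (Finset.univ.filter (fun s : Sym2 (Fin n) => ¬ s.IsDiag)).card := by
    rw [Int.card_Ico]
    have h5 : (Finset.univ.filter (fun s : Sym2 (Fin n) => ¬ s.IsDiag)).card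
        = Fintype.card {s : Sym2 (Fin n) // ¬ s.IsDiag} := (Fintype.card_subtype _).symm
    rw [h5, Sym2.card_subtype_not_diag, Fintype.card_fin]
    simp
  refine Finset.inj_on_of_surj_on_of_card_le (fun u _ => stepPair A u)
    (fun u hu => Finset.mem_filter.2 ⟨Finset.mem_univ _, stepPair_not_diag A u⟩)
    ?_ hcards.le h1 h2 ?_
  · intro sp hsp
    induction sp using Sym2.ind with
    | _ a' b' =>
      have hnd : ¬ (s(a', b')).IsDiag := (Finset.mem_filter.1 hsp).2
      have hab' : a' ≠ b' := by simpa using hnd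
      obtain ⟨u, hu, hpe⟩ := window_surj A t hab'
      exact ⟨u, hu, hpe⟩
  · show stepPair A u1 = stepPair A u2
    rw [stepPair_eq A u1 hab e1, stepPair_eq A u2 hab e2]

end Per
section Final

variable {n : ℕ} (A : AllowableSeq n) (blue : Fin n → Bool) {k : ℕ} {γ : ℤ → Fin n}

lemma S_congr_pos {M : Type} [AddCommMonoid M] {t t' : ℤ} (hpos : A.pos t' = A.pos t)
    (c : ℕ) (f : Fin n → M) : S A t' c f = S A t c f := by
  unfold S; rw [hpos]

lemma gamma_eq_of_pos_eq (hγ : A.IsKth (Finset.univ.filter (fun x => blue x = true)) k γ)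
    (hk : 1 ≤ k) {t t' : ℤ} (hpos : A.pos t' = A.pos t) : γ t' = γ t := by
  apply gamma_unique_S A blue hγ hk t (γ t') ((Finset.mem_filter.1 (hγ t').1).2)
  have h1 : S A t' (A.pos t' (γ t') : ℕ) (fb blue) = k - 1 := by
    rw [← card_filter_eq_S]; exact (hγ t').2
  rw [hpos] at h1
  rw [← S_congr_pos A hpos]
  exact h1

lemma cweight_eq_of_pos_eq (hγ : A.IsKth (Finset.univ.filter (fun x => blue x = true)) k γ)
    (hk : 1 ≤ k) {t t' : ℤ} (hpos : A.pos t' = A.pos t) :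
    A.cweight blue γ t' = A.cweight blue γ t := by
  rw [cweight_eq_S, cweight_eq_S, gamma_eq_of_pos_eq A blue hγ hk hpos, hpos,
    S_congr_pos A hpos]

lemma cweight_period (hγ : A.IsKth (Finset.univ.filter (fun x => blue x = true)) k γ)
    (hk : 1 ≤ k) (m t : ℤ) :
    A.cweight blue γ (t + 2 * (n.choose 2 : ℤ) * m) = A.cweight blue γ t :=
  cweight_eq_of_pos_eq A blue hγ hk (pos_two_period_zsmul A m t)

lemma gamma_shift_ne (hγ : A.IsKth (Finset.univ.filter (fun x => blue x = true)) k γ)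
    {b : ℕ} (hb : (Finset.univ.filter (fun x => blue x = true)).card = b)
    (h2k : 2 * k ≤ b) (hk : 1 ≤ k) (t : ℤ) :
    γ (t + (n.choose 2 : ℤ)) ≠ γ t := by
  intro h
  have h1 := (hγ t).2
  have h2 := (hγ (t + (n.choose 2 : ℤ))).2
  rw [h] at h2
  have h3 : (Finset.univ.filter (fun x => blue x = true)).filter
      (fun x => A.pos (t + (n.choose 2 : ℤ)) x < A.pos (t + (n.choose 2 : ℤ)) (γ t))
      = (Finset.univ.filter (fun x => blue x = true)).filter
        (fun x => A.pos t (γ t) < A.pos t x) := by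
    apply Finset.filter_congr
    intro x _
    simp only [pos_rev_apply, Fin.rev_lt_rev, eq_iff_iff]
  rw [h3] at h2
  have h4 := Finset.card_filter_add_card_filter_not
    (s := Finset.univ.filter (fun x => blue x = true))
    (p := fun x => A.pos t x < A.pos t (γ t))
  have h5 : (Finset.univ.filter (fun x => blue x = true)).filter
      (fun x => ¬ A.pos t x < A.pos t (γ t))
      = insert (γ t) ((Finset.univ.filter (fun x => blue x = true)).filter
        (fun x => A.pos t (γ t) < A.pos t x)) := by
    ext y
    simp only [Finset.mem_filter, Finset.mem_insert, Finset.mem_univ, true_and, not_lt]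
    constructor
    · rintro ⟨hy, hle⟩
      rcases lt_or_eq_of_le hle with hlt | heq
      · exact Or.inr ⟨hy, hlt⟩
      · exact Or.inl ((A.pos t).injective heq.symm)
    · rintro (rfl | ⟨hy, hlt⟩)
      · exact ⟨(Finset.mem_filter.1 (hγ t).1).2, le_refl _⟩
      · exact ⟨hy, le_of_lt hlt⟩
  rw [h5] at h4
  have h6 : γ t ∉ (Finset.univ.filter (fun x => blue x = true)).filter
      (fun x => A.pos t (γ t) < A.pos t x) := by
    simp only [Finset.mem_filter]
    rintro ⟨-, hlt⟩
    exact lt_irrefl _ hlt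
  rw [Finset.card_insert_of_notMem h6, hb] at h4
  omega

lemma up_step (hγ : A.IsKth (Finset.univ.filter (fun x => blue x = true)) k γ)
    (hk : 1 ≤ k) (t : ℤ) (h : A.cweight blue γ t < A.cweight blue γ (t + 1)) :
    ∃ x : Fin n, blue x = false ∧ (A.pos t x : ℕ) + 1 = (A.pos t (γ t) : ℕ) ∧
      A.pos (t + 1) = (Equiv.swap x (γ t)).trans (A.pos t) ∧
      A.cweight blue γ (t + 1) = A.cweight blue γ t + 1 ∧
      S A t (A.pos t x : ℕ) (wt blue) = A.cweight blue γ t + 1 ∧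
      S A t (A.pos t x : ℕ) (fb blue) = k - 1 := by
  rcases master A blue hγ hk t with h0 | ⟨x, hx1, hx2, hx3, hx4⟩ | ⟨x, hx1, hx2, hx3, hx4⟩
  · omega
  · refine ⟨x, hx1, hx2, hx3, hx4, ?_, ?_⟩
    · have hsp := S_point A t x (wt blue)
      rw [hx2] at hsp
      have hcw := cweight_eq_S A blue γ t
      have hwx : wt blue x = -1 := by simp [wt, hx1]
      omega
    · have hsp := S_point A t x (fb blue)
      rw [hx2] at hsp
      have hγS : S A t (A.pos t (γ t) : ℕ) (fb blue) = k - 1 := by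
        rw [← card_filter_eq_S]; exact (hγ t).2
      have hfx : fb blue x = 0 := by simp [fb, hx1]
      omega
  · omega

lemma down_step (hγ : A.IsKth (Finset.univ.filter (fun x => blue x = true)) k γ)
    (hk : 1 ≤ k) (t : ℤ) (h : A.cweight blue γ (t + 1) < A.cweight blue γ t) :
    ∃ x : Fin n, blue x = false ∧ (A.pos t x : ℕ) = (A.pos t (γ t) : ℕ) + 1 ∧
      A.pos (t + 1) = (Equiv.swap (γ t) x).trans (A.pos t) ∧
      A.cweight blue γ (t + 1) = A.cweight blue γ t - 1 ∧
      S A t (A.pos t (γ t) : ℕ) (wt blue) = A.cweight blue γ t ∧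
      S A t (A.pos t (γ t) : ℕ) (fb blue) = k - 1 := by
  rcases master A blue hγ hk t with h0 | ⟨x, hx1, hx2, hx3, hx4⟩ | ⟨x, hx1, hx2, hx3, hx4⟩
  · omega
  · omega
  · refine ⟨x, hx1, hx2, hx3, hx4, (cweight_eq_S A blue γ t).symm, ?_⟩
    rw [← card_filter_eq_S]; exact (hγ t).2

lemma ivt_up (f : ℤ → ℤ) (δ : ℤ) :
    ∀ (d : ℕ) (ta : ℤ), f ta < δ → δ ≤ f (ta + (d : ℤ)) → ∃ t, f t < δ ∧ δ ≤ f (t + 1) := by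
  intro d
  induction d with
  | zero => intro ta h1 h2; simp at h2; omega
  | succ d ih =>
    intro ta h1 h2
    by_cases h : f (ta + (d : ℤ)) < δ
    · refine ⟨ta + (d : ℤ), h, ?_⟩
      have e : ta + ((d + 1 : ℕ) : ℤ) = ta + (d : ℤ) + 1 := by push_cast; ring
      rwa [e] at h2
    · exact ih ta h1 (by omega)

lemma ivt_down (f : ℤ → ℤ) (δ : ℤ) :
    ∀ (d : ℕ) (ta : ℤ), δ ≤ f ta → f (ta + (d : ℤ)) < δ → ∃ t, δ ≤ f t ∧ f (t + 1) < δ := by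
  intro d
  induction d with
  | zero => intro ta h1 h2; simp at h2; omega
  | succ d ih =>
    intro ta h1 h2
    by_cases h : δ ≤ f (ta + (d : ℤ))
    · refine ⟨ta + (d : ℤ), h, ?_⟩
      have e : ta + ((d + 1 : ℕ) : ℤ) = ta + (d : ℤ) + 1 := by push_cast; ring
      rwa [e] at h2
    · exact ih ta h1 (by omega)

end Final
end TB

open TB

theorem two_balanced_from_changing_Bk (n b r δ : ℕ) (A : AllowableSeq n) (blue : Fin n → Bool)
    (hn : n = b + r)
    (hb : (Finset.univ.filter (fun x => blue x = true)).card = b)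
    (hr : (Finset.univ.filter (fun x => blue x = false)).card = r)
    (hbr : b = r + 2 * δ)
    (k : ℕ) (hk1 : δ + 1 ≤ k) (hk2 : k ≤ b / 2)
    (γ : ℤ → Fin n) (hγ : A.IsKth (Finset.univ.filter (fun x => blue x = true)) k γ)
    (hchg : ¬ (∀ t : ℤ, (δ : ℤ) ≤ A.cweight blue γ t) ∧
            ¬ (∀ t : ℤ, A.cweight blue γ t < (δ : ℤ))) :
    ∃ (p₁ q₁ : Fin n) (t₁ : ℤ) (p₂ q₂ : Fin n) (t₂ : ℤ),
      A.BalancedSwap blue (δ : ℤ) t₁ p₁ q₁ ∧ A.blueLeftPair blue t₁ p₁ q₁ = k - 1 ∧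
      A.BalancedSwap blue (δ : ℤ) t₂ p₂ q₂ ∧ A.blueLeftPair blue t₂ p₂ q₂ = k - 1 ∧
      s(p₁, q₁) ≠ s(p₂, q₂) := by
  classical
  obtain ⟨hc1, hc2⟩ := hchg
  push_neg at hc1 hc2
  obtain ⟨ta, hta⟩ := hc1
  obtain ⟨tb, htb⟩ := hc2
  have hk : 1 ≤ k := by omega
  have hbk : 2 * k ≤ b := by omega
  have hr1 : 1 ≤ r := by omega
  have hn2 : 2 ≤ n := by omega
  have hC : 0 < (n.choose 2 : ℤ) := by exact_mod_cast Nat.choose_pos hn2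
  set C : ℤ := (n.choose 2 : ℤ) with hCdef
  have hper : ∀ m t : ℤ, A.cweight blue γ (t + 2 * C * m) = A.cweight blue γ t :=
    fun m t => cweight_period A blue hγ hk m t
  -- an up-crossing
  have hup : ∃ t, A.cweight blue γ t < (δ : ℤ) ∧ (δ : ℤ) ≤ A.cweight blue γ (t + 1) := by
    have hm : (0 : ℤ) ≤ ((ta - tb).natAbs : ℤ) := by positivity
    have h1 : (1 : ℤ) * ((ta - tb).natAbs : ℤ) ≤ (2 * C) * ((ta - tb).natAbs : ℤ) :=
      mul_le_mul_of_nonneg_right (by omega) hm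
    have h2 : ta - tb ≤ ((ta - tb).natAbs : ℤ) := Int.le_natAbs
    have hge : ta ≤ tb + 2 * C * ((ta - tb).natAbs : ℤ) := by omega
    have hd : ta + ((tb + 2 * C * ((ta - tb).natAbs : ℤ) - ta).toNat : ℤ)
        = tb + 2 * C * ((ta - tb).natAbs : ℤ) := by omega
    apply ivt_up (A.cweight blue γ) (δ : ℤ) (tb + 2 * C * ((ta - tb).natAbs : ℤ) - ta).toNat
      ta hta
    rw [hd, hper]
    exact htb
  -- a down-crossing
  have hdown : ∃ t, (δ : ℤ) ≤ A.cweight blue γ t ∧ A.cweight blue γ (t + 1) < (δ : ℤ) := by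
    have hm : (0 : ℤ) ≤ ((tb - ta).natAbs : ℤ) := by positivity
    have h1 : (1 : ℤ) * ((tb - ta).natAbs : ℤ) ≤ (2 * C) * ((tb - ta).natAbs : ℤ) :=
      mul_le_mul_of_nonneg_right (by omega) hm
    have h2 : tb - ta ≤ ((tb - ta).natAbs : ℤ) := Int.le_natAbs
    have hge : tb ≤ ta + 2 * C * ((tb - ta).natAbs : ℤ) := by omega
    have hd : tb + ((ta + 2 * C * ((tb - ta).natAbs : ℤ) - tb).toNat : ℤ)
        = ta + 2 * C * ((tb - ta).natAbs : ℤ) := by omega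
    apply ivt_down (A.cweight blue γ) (δ : ℤ) (ta + 2 * C * ((tb - ta).natAbs : ℤ) - tb).toNat
      tb htb
    rw [hd, hper]
    exact hta
  obtain ⟨t1, h1a, h1b⟩ := hup
  obtain ⟨t2, h2a, h2b⟩ := hdown
  obtain ⟨x1, hx1f, hx1pos, hx1sw, hx1d, hx1wt, hx1fb⟩ := up_step A blue hγ hk t1 (by omega)
  obtain ⟨x2, hx2f, hx2pos, hx2sw, hx2d, hx2wt, hx2fb⟩ := down_step A blue hγ hk t2 (by omega)
  have hgb1 : blue (γ t1) = true := (Finset.mem_filter.1 (hγ t1).1).2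
  have hgb2 : blue (γ t2) = true := (Finset.mem_filter.1 (hγ t2).1).2
  have hcw1 : A.cweight blue γ t1 = (δ : ℤ) - 1 := by omega
  have hcw2 : A.cweight blue γ t2 = (δ : ℤ) := by omega
  have hne1 : x1 ≠ γ t1 := fun h => by rw [h] at hx1pos; omega
  have hne2 : γ t2 ≠ x2 := fun h => by rw [← h] at hx2pos; omega
  have hmin1 : min (A.pos t1 x1 : ℕ) (A.pos t1 (γ t1) : ℕ) = (A.pos t1 x1 : ℕ) :=
    min_eq_left (by omega)
  have hmin2 : min (A.pos t2 (γ t2) : ℕ) (A.pos t2 x2 : ℕ) = (A.pos t2 (γ t2) : ℕ) :=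
    min_eq_left (by omega)
  have hbal1 : A.BalancedSwap blue (δ : ℤ) t1 x1 (γ t1) := by
    refine ⟨⟨hne1, hx1sw⟩, by simp [hx1f, hgb1], ?_⟩
    show S A t1 (min (A.pos t1 x1 : ℕ) (A.pos t1 (γ t1) : ℕ)) (wt blue) = (δ : ℤ)
    rw [hmin1]
    omega
  have hblp1 : A.blueLeftPair blue t1 x1 (γ t1) = k - 1 := by
    unfold AllowableSeq.blueLeftPair
    rw [hmin1, card_blue_lt A blue t1]
    exact hx1fb
  have hbal2 : A.BalancedSwap blue (δ : ℤ) t2 (γ t2) x2 := by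
    refine ⟨⟨hne2, hx2sw⟩, by simp [hx2f, hgb2], ?_⟩
    show S A t2 (min (A.pos t2 (γ t2) : ℕ) (A.pos t2 x2 : ℕ)) (wt blue) = (δ : ℤ)
    rw [hmin2]
    omega
  have hblp2 : A.blueLeftPair blue t2 (γ t2) x2 = k - 1 := by
    unfold AllowableSeq.blueLeftPair
    rw [hmin2, card_blue_lt A blue t2]
    exact hx2fb
  refine ⟨x1, γ t1, t1, γ t2, x2, t2, hbal1, hblp1, hbal2, hblp2, ?_⟩
  intro heq
  rw [Sym2.eq_iff] at heq
  rcases heq with ⟨hA, hB⟩ | ⟨hA, hB⟩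
  · rw [hA, hgb2] at hx1f
    exact absurd hx1f (by simp)
  · -- hA : x1 = x2, hB : γ t1 = γ t2
    have e2' : A.pos (t2 + 1) = (Equiv.swap x1 (γ t1)).trans (A.pos t2) := by
      rw [hx2sw, hA, hB, Equiv.swap_comm]
    have hdiv := Int.emod_add_mul_ediv (t2 - t1) C
    set r0 : ℤ := (t2 - t1) % C with hr0def
    set j : ℤ := (t2 - t1) / C with hjdef
    have hr0 : 0 ≤ r0 := Int.emod_nonneg _ (by omega)
    have hrC : r0 < C := Int.emod_lt_of_pos _ hC
    have hu2 : t2 + C * (-j) = t1 + r0 := by rw [mul_neg]; omega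
    have e2'' := sw_shift_zsmul A (-j) e2'
    rw [hu2] at e2''
    have h1mem : t1 ∈ Finset.Ico t1 (t1 + C) := by rw [Finset.mem_Ico]; omega
    have humem : t1 + r0 ∈ Finset.Ico t1 (t1 + C) := by rw [Finset.mem_Ico]; omega
    have heq1 : t1 = t1 + r0 := once_per_window A t1 hne1 h1mem humem hx1sw e2''
    have ht2 : t2 = t1 + C * j := by omega
    rcases Int.even_or_odd j with ⟨m, hm⟩ | ⟨m, hm⟩
    · have hcalc : C * (m + m) = 2 * C * m := by ring
      have e : t2 = t1 + 2 * C * m := by rw [hm] at ht2; omega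
      have hpos : A.pos t2 = A.pos t1 := by rw [e]; exact pos_two_period_zsmul A m t1
      rw [← hA, ← hB, hpos] at hx2pos
      omega
    · have hcalc : C * (2 * m + 1) = 2 * C * m + C := by ring
      have e : t2 = (t1 + C) + 2 * C * m := by rw [hm] at ht2; omega
      have hpos : A.pos t2 = A.pos (t1 + C) := by rw [e]; exact pos_two_period_zsmul A m (t1 + C)
      have hg2 : γ t2 = γ (t1 + C) := gamma_eq_of_pos_eq A blue hγ hk hpos
      have hgne := gamma_shift_ne A blue hγ hb hbk hk t1
      rw [← hg2, ← hB] at hgne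
      exact hgne rfl
end

section
/- Suppose b is odd and let k₀ := (b+1)/2. Then there is at least one balanced transposition of Π that has exactly k₀ − 1 blue points strictly to the left of the transposed pair at the time of the transposition. -/
open Finset

open AllowableSeq


section OddMiddleAux

open AllowableSeq

variable {n : ℕ}

lemma card_val_lt' (m : ℕ) (hm : m ≤ n) :
    (univ.filter fun i : Fin n => (i : ℕ) < m).card = m := by
  rcases eq_or_lt_of_le hm with h | h
  · subst h
    rw [Finset.filter_true_of_mem (fun i _ => i.is_lt), Finset.card_univ, Fintype.card_fin]
  · have he : (univ.filter fun i : Fin n => (i : ℕ) < m) = Finset.Iio (⟨m, h⟩ : Fin n) := by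
      ext i; simp [Fin.lt_def]
    rw [he, Fin.card_Iio]

lemma card_pos_lt' (A : AllowableSeq n) (t : ℤ) (m : ℕ) (hm : m ≤ n) :
    (univ.filter fun x : Fin n => (A.pos t x : ℕ) < m).card = m := by
  have h := Finset.card_equiv (s := univ.filter fun x : Fin n => (A.pos t x : ℕ) < m)
    (t := univ.filter fun i : Fin n => (i : ℕ) < m) (A.pos t) (fun i => by simp)
  rw [h, card_val_lt' m hm]

lemma sum_wt_eq (blue : Fin n → Bool) (s : Finset (Fin n)) :
    ∑ x ∈ s, wt blue x = 2 * ((s.filter fun x => blue x = true).card : ℤ) - s.card := by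
  have h : ∀ x ∈ s, wt blue x = (if blue x = true then (2:ℤ) else 0) - 1 := by
    intro x _
    simp only [wt]
    cases blue x <;> simp
  rw [Finset.sum_congr rfl h, Finset.sum_sub_distrib, ← Finset.sum_filter]
  simp [mul_comm]

/-- Common tail: from a blue/red swap at the middle position with left weight `δ`,
conclude the theorem's existential. -/
lemma tail_lemma (n b r δ : ℕ) (A : AllowableSeq n) (blue : Fin n → Bool)
    (hbr : b = r + 2 * δ) (hodd : Odd b) (t : ℤ) (p q : Fin n)
    (hq : (A.pos t q : ℕ) = (A.pos t p : ℕ) + 1)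
    (hswap : A.pos (t + 1) = (Equiv.swap p q).trans (A.pos t))
    (hne : p ≠ q)
    (hiff : blue p ↔ ¬ blue q)
    (hp : (A.pos t p : ℕ) + 1 = r + δ)
    (hsum : (∑ x : Fin n, if (A.pos t x : ℕ) < (A.pos t p : ℕ) then wt blue x else 0)
      = (δ : ℤ)) :
    ∃ (p q : Fin n) (t : ℤ),
      A.BalancedSwap blue (δ : ℤ) t p q ∧ A.blueLeftPair blue t p q = (b + 1) / 2 - 1 := by
  have hmin : min (A.pos t p : ℕ) (A.pos t q : ℕ) = (A.pos t p : ℕ) := by omega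
  refine ⟨p, q, t, ⟨⟨hne, hswap⟩, hiff, ?_⟩, ?_⟩
  · rw [hmin]; exact hsum
  · -- count blue points to the left
    have hfil : (∑ x : Fin n, if (A.pos t x : ℕ) < (A.pos t p : ℕ) then wt blue x else 0)
        = ∑ x ∈ univ.filter (fun x : Fin n => (A.pos t x : ℕ) < (A.pos t p : ℕ)), wt blue x :=
      (Finset.sum_filter _ _).symm
    rw [hfil, sum_wt_eq,
      card_pos_lt' A t _ (le_of_lt (A.pos t p).is_lt)] at hsum
    have hBLP : A.blueLeftPair blue t p q
        = ((univ.filter fun x : Fin n => (A.pos t x : ℕ) < (A.pos t p : ℕ)).filter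
            fun x => blue x = true).card := by
      unfold AllowableSeq.blueLeftPair
      rw [hmin, Finset.filter_filter]
      congr 1
      ext y
      simp [and_comm]
    rw [hBLP]
    obtain ⟨k, hk⟩ := hodd
    omega


/-- If the weight of the left half crosses `δ` between times `t` and `t+1`,
there is a balanced middle swap. -/
lemma key_lemma (n b r δ : ℕ) (A : AllowableSeq n) (blue : Fin n → Bool)
    (hbr : b = r + 2 * δ) (hodd : Odd b) (t : ℤ)
    (hcr : ((∑ x : Fin n, if (A.pos t x : ℕ) < r + δ then wt blue x else 0) < (δ : ℤ) ∧
            (δ : ℤ) < ∑ x : Fin n, if (A.pos (t+1) x : ℕ) < r + δ then wt blue x else 0) ∨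
           ((∑ x : Fin n, if (A.pos (t+1) x : ℕ) < r + δ then wt blue x else 0) < (δ : ℤ) ∧
            (δ : ℤ) < ∑ x : Fin n, if (A.pos t x : ℕ) < r + δ then wt blue x else 0)) :
    ∃ (p q : Fin n) (t : ℤ),
      A.BalancedSwap blue (δ : ℤ) t p q ∧ A.blueLeftPair blue t p q = (b + 1) / 2 - 1 := by
  set m := r + δ with hm
  set gt := ∑ x : Fin n, if (A.pos t x : ℕ) < m then wt blue x else 0 with hgt
  set gt1 := ∑ x : Fin n, if (A.pos (t+1) x : ℕ) < m then wt blue x else 0 with hgt1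
  obtain ⟨p, q, hq, hswap⟩ := A.adj t
  have hne : p ≠ q := by
    intro h; rw [h] at hq; omega
  have hsum1 : gt1 = ∑ x : Fin n,
      if (A.pos t x : ℕ) < m then wt blue (Equiv.swap p q x) else 0 := by
    calc gt1 = ∑ x : Fin n, (fun y : Fin n =>
          if (A.pos t y : ℕ) < m then wt blue (Equiv.swap p q y) else 0)
            (Equiv.swap p q x) := by
          refine Finset.sum_congr rfl fun x _ => ?_
          rw [hswap]
          simp [Equiv.swap_apply_self]
          rfl
      _ = _ := by
          exact Equiv.sum_comp (Equiv.swap p q) (fun y : Fin n =>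
            if (A.pos t y : ℕ) < m then wt blue (Equiv.swap p q y) else 0)
  have hdiff : gt1 - gt = ∑ x ∈ ({p, q} : Finset (Fin n)),
      ((if (A.pos t x : ℕ) < m then wt blue (Equiv.swap p q x) else 0)
        - (if (A.pos t x : ℕ) < m then wt blue x else 0)) := by
    rw [hsum1, hgt, ← Finset.sum_sub_distrib]
    refine (Finset.sum_subset (Finset.subset_univ _) ?_).symm
    intro x _ hx
    simp only [Finset.mem_insert, Finset.mem_singleton] at hx
    push_neg at hx
    rw [Equiv.swap_apply_of_ne_of_ne hx.1 hx.2, sub_self]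
  rw [Finset.sum_pair hne, Equiv.swap_apply_left, Equiv.swap_apply_right] at hdiff
  by_cases hp : (A.pos t p : ℕ) < m
  · by_cases hq2 : (A.pos t q : ℕ) < m
    · exfalso
      rw [if_pos hp, if_pos hp, if_pos hq2, if_pos hq2] at hdiff
      omega
    · rw [if_pos hp, if_pos hp, if_neg hq2, if_neg hq2] at hdiff
      have hpm : (A.pos t p : ℕ) + 1 = m := by omega
      -- split gt at position p
      have hinj : Function.Injective (A.pos t) := (A.pos t).injective
      have hSm : (univ.filter fun y : Fin n => (A.pos t y : ℕ) < m)
          = insert p (univ.filter fun y : Fin n => (A.pos t y : ℕ) < (A.pos t p : ℕ)) := by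
        ext y
        simp only [Finset.mem_insert, Finset.mem_filter, Finset.mem_univ, true_and]
        constructor
        · intro hy
          rcases Nat.lt_or_ge (A.pos t y : ℕ) (A.pos t p : ℕ) with h | h
          · exact Or.inr h
          · left
            have hv : (A.pos t y : ℕ) = (A.pos t p : ℕ) := by omega
            exact hinj (Fin.val_injective hv)
        · rintro (rfl | hy)
          · exact hp
          · omega
      have hgt_split : gt = wt blue p
          + ∑ x : Fin n, if (A.pos t x : ℕ) < (A.pos t p : ℕ) then wt blue x else 0 := by
        rw [hgt, ← Finset.sum_filter, hSm, Finset.sum_insert (by simp), Finset.sum_filter]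
      -- colour analysis
      cases hbp : blue p <;> cases hbq : blue q
      · exfalso
        rw [wt, wt, hbp, hbq] at hdiff
        simp at hdiff
        omega
      · -- p red, q blue : gt1 = gt + 2, gt = δ - 1
        have hwp : wt blue p = -1 := by rw [wt, hbp]; simp
        have hwq : wt blue q = 1 := by rw [wt, hbq]; simp
        rw [hwp, hwq] at hdiff
        have hgd : gt = (δ : ℤ) - 1 := by omega
        refine tail_lemma n b r δ A blue hbr hodd t p q hq hswap hne
          (by simp [hbp, hbq]) (by omega) ?_
        rw [hgd, hwp] at hgt_split
        omega
      · -- p blue, q red : gt1 = gt - 2, gt = δ + 1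
        have hwp : wt blue p = 1 := by rw [wt, hbp]; simp
        have hwq : wt blue q = -1 := by rw [wt, hbq]; simp
        rw [hwp, hwq] at hdiff
        have hgd : gt = (δ : ℤ) + 1 := by omega
        refine tail_lemma n b r δ A blue hbr hodd t p q hq hswap hne
          (by simp [hbp, hbq]) (by omega) ?_
        rw [hgd, hwp] at hgt_split
        omega
      · exfalso
        rw [wt, wt, hbp, hbq] at hdiff
        simp at hdiff
        omega
  · exfalso
    rw [if_neg hp, if_neg hp, if_neg (by omega : ¬ (A.pos t q : ℕ) < m),
      if_neg (by omega : ¬ (A.pos t q : ℕ) < m)] at hdiff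
    omega

end OddMiddleAux

theorem odd_middle_balanced (n b r δ : ℕ) (A : AllowableSeq n) (blue : Fin n → Bool)
    (hn : n = b + r)
    (hb : (Finset.univ.filter (fun x => blue x = true)).card = b)
    (hr : (Finset.univ.filter (fun x => blue x = false)).card = r)
    (hbr : b = r + 2 * δ)
    (hodd : Odd b) :
    ∃ (p q : Fin n) (t : ℤ),
      A.BalancedSwap blue (δ : ℤ) t p q ∧ A.blueLeftPair blue t p q = (b + 1) / 2 - 1 := by
  classical
  obtain ⟨k, hk⟩ := hodd
  set m := r + δ with hm
  have hmn : m ≤ n := by omega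
  set g : ℤ → ℤ := fun t => ∑ x : Fin n, if (A.pos t x : ℕ) < m then wt blue x else 0
    with hg
  have hparity : ∀ t : ℤ, g t ≠ (δ : ℤ) := by
    intro t hEq
    have h1 : g t = ∑ x ∈ univ.filter (fun x : Fin n => (A.pos t x : ℕ) < m), wt blue x :=
      (Finset.sum_filter _ _).symm
    rw [h1, sum_wt_eq, card_pos_lt' A t m hmn] at hEq
    omega
  have htotal : (∑ x : Fin n, wt blue x) = 2 * (δ : ℤ) := by
    have h1 := sum_wt_eq blue (univ : Finset (Fin n))
    rw [hb, Finset.card_univ, Fintype.card_fin] at h1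
    rw [h1]
    omega
  have hrev : ∀ t : ℤ, g (t + (n.choose 2 : ℤ)) = 2 * (δ : ℤ) - g t := by
    intro t
    have h1 : ∀ x : Fin n, (if (A.pos (t + (n.choose 2 : ℤ)) x : ℕ) < m then wt blue x else 0)
        = wt blue x - (if (A.pos t x : ℕ) < m then wt blue x else 0) := by
      intro x
      rw [A.rev t]
      simp only [Equiv.trans_apply]
      have hv : ((Fin.revPerm (A.pos t x) : Fin n) : ℕ) = n - 1 - (A.pos t x : ℕ) := by
        simp [Fin.revPerm_apply, Fin.val_rev]
        omega
      simp only [hv]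
      have hlt : (A.pos t x : ℕ) < n := (A.pos t x).is_lt
      by_cases hx : (A.pos t x : ℕ) < m
      · rw [if_neg (by omega), if_pos hx]; ring
      · rw [if_pos (by omega), if_neg hx]; ring
    calc g (t + (n.choose 2 : ℤ))
        = ∑ x : Fin n, (wt blue x - (if (A.pos t x : ℕ) < m then wt blue x else 0)) :=
          Finset.sum_congr rfl fun x _ => h1 x
      _ = 2 * (δ : ℤ) - g t := by rw [Finset.sum_sub_distrib, htotal]
  set C := n.choose 2 with hC
  have hCpos : 0 < C := Nat.choose_pos (by omega)
  rcases lt_or_gt_of_ne (hparity 0) with h0 | h0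
  · -- g 0 < δ, g C > δ : find upward crossing
    have hPC : (δ : ℤ) < g ((C : ℕ) : ℤ) := by
      have h2 := hrev 0
      rw [zero_add] at h2
      rw [h2]
      omega
    have hex : ∃ s : ℕ, (δ : ℤ) < g (s : ℤ) := ⟨C, hPC⟩
    set t0 := Nat.find hex with ht0def
    have ht0 : (δ : ℤ) < g (t0 : ℤ) := Nat.find_spec hex
    have ht0ne : t0 ≠ 0 := by
      intro h
      rw [h] at ht0
      exact absurd ht0 (by push_cast; omega)
    have hprev : ¬ (δ : ℤ) < g ((t0 - 1 : ℕ) : ℤ) := Nat.find_min hex (by omega)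
    have hlt : g ((t0 - 1 : ℕ) : ℤ) < (δ : ℤ) :=
      lt_of_le_of_ne (not_lt.mp hprev) (hparity _)
    have hstep : ((t0 - 1 : ℕ) : ℤ) + 1 = (t0 : ℤ) := by omega
    refine key_lemma n b r δ A blue hbr ⟨k, hk⟩ ((t0 - 1 : ℕ) : ℤ) (Or.inl ⟨hlt, ?_⟩)
    rw [hstep]
    exact ht0
  · -- g 0 > δ, g C < δ : find downward crossing
    have hPC : g ((C : ℕ) : ℤ) < (δ : ℤ) := by
      have h2 := hrev 0
      rw [zero_add] at h2
      rw [h2]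
      omega
    have hex : ∃ s : ℕ, g (s : ℤ) < (δ : ℤ) := ⟨C, hPC⟩
    set t0 := Nat.find hex with ht0def
    have ht0 : g (t0 : ℤ) < (δ : ℤ) := Nat.find_spec hex
    have ht0ne : t0 ≠ 0 := by
      intro h
      rw [h] at ht0
      exact absurd ht0 (by push_cast; omega)
    have hprev : ¬ g ((t0 - 1 : ℕ) : ℤ) < (δ : ℤ) := Nat.find_min hex (by omega)
    have hlt : (δ : ℤ) < g ((t0 - 1 : ℕ) : ℤ) :=
      lt_of_le_of_ne (not_lt.mp hprev) (Ne.symm (hparity _))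
    have hstep : ((t0 - 1 : ℕ) : ℤ) + 1 = (t0 : ℤ) := by omega
    refine key_lemma n b r δ A blue hbr ⟨k, hk⟩ ((t0 - 1 : ℕ) : ℤ) (Or.inr ⟨?_, hlt⟩)
    rw [hstep]
    exact ht0
end

section
/- Suppose that for every integer k with δ+1 ≤ k ≤ ⌊b/2⌋ the curve B_k is δ-changing. Then Π has at least r distinct balanced transpositions; that is, the number of unordered pairs {p, q} of points swapped by some balanced transposition of Π is at least r. -/
open Finset

open Finset

section Util
set_option linter.unusedSectionVars false
variable {α : Type*} [DecidableEq α] [Fintype α]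

lemma kth_unique_s9 (S : Finset α) (f : α → ℕ) (hf : ∀ a b, f a = f b → a = b)
    {x y : α} (hx : x ∈ S) (hy : y ∈ S)
    (h : (S.filter (fun z => f z < f x)).card = (S.filter (fun z => f z < f y)).card) :
    x = y := by
  rcases lt_trichotomy (f x) (f y) with hlt | heq | hlt
  · exfalso
    have hsub : (S.filter (fun z => f z < f x)) ⊆ (S.filter (fun z => f z < f y)) :=
      Finset.monotone_filter_right S (fun z _ hz => lt_trans hz hlt)
    have hss := (Finset.ssubset_iff_of_subset hsub).2
      ⟨x, Finset.mem_filter.2 ⟨hx, hlt⟩, by simp⟩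
    exact absurd h (Finset.card_lt_card hss).ne
  · exact hf _ _ heq
  · exfalso
    have hsub : (S.filter (fun z => f z < f y)) ⊆ (S.filter (fun z => f z < f x)) :=
      Finset.monotone_filter_right S (fun z _ hz => lt_trans hz hlt)
    have hss := (Finset.ssubset_iff_of_subset hsub).2
      ⟨y, Finset.mem_filter.2 ⟨hy, hlt⟩, by simp⟩
    exact absurd h.symm (Finset.card_lt_card hss).ne

lemma kth_exists (S : Finset α) (f : α → ℕ) (hf : ∀ a b, f a = f b → a = b) :
    ∀ j, j < S.card → ∃ x ∈ S, (S.filter (fun z => f z < f x)).card = j := by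
  intro j
  induction j with
  | zero =>
    intro hj
    obtain ⟨x, hx, hmin⟩ := S.exists_min_image f (Finset.card_pos.1 (by omega))
    refine ⟨x, hx, ?_⟩
    rw [Finset.card_eq_zero, Finset.filter_eq_empty_iff]
    intro z hz
    exact not_lt.2 (hmin z hz)
  | succ j ih =>
    intro hj
    obtain ⟨x, hx, hcard⟩ := ih (by omega)
    have hne : (S.filter (fun z => f x < f z)).Nonempty := by
      rw [Finset.filter_nonempty_iff]
      by_contra hcon
      push_neg at hcon
      have hsub : S ⊆ insert x (S.filter (fun z => f z < f x)) := by
        intro z hz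
        rcases lt_trichotomy (f z) (f x) with h | h | h
        · exact Finset.mem_insert_of_mem (Finset.mem_filter.2 ⟨hz, h⟩)
        · rw [hf _ _ h]; exact Finset.mem_insert_self _ _
        · exact absurd h (not_lt.2 (hcon z hz))
      have := Finset.card_le_card hsub
      have := Finset.card_insert_le x (S.filter (fun z => f z < f x))
      omega
    obtain ⟨y, hy, hymin⟩ := (S.filter (fun z => f x < f z)).exists_min_image f hne
    rw [Finset.mem_filter] at hy
    refine ⟨y, hy.1, ?_⟩
    have hset : S.filter (fun z => f z < f y) = insert x (S.filter (fun z => f z < f x)) := by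
      ext z
      simp only [Finset.mem_filter, Finset.mem_insert]
      constructor
      · rintro ⟨hzS, hzy⟩
        rcases lt_trichotomy (f z) (f x) with h | h | h
        · exact Or.inr ⟨hzS, h⟩
        · exact Or.inl (hf _ _ h)
        · exact absurd (hymin z (Finset.mem_filter.2 ⟨hzS, h⟩)) (not_le.2 hzy)
      · rintro (rfl | ⟨hzS, hzx⟩)
        · exact ⟨hx, hy.2⟩
        · exact ⟨hzS, lt_trans hzx hy.2⟩
    rw [hset, Finset.card_insert_of_notMem (by simp), hcard]

lemma trichotomy_sum (g : α → ℤ) (f : α → ℕ) (hf : ∀ a b, f a = f b → a = b) (c : α) :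
    (∑ x : α, if f x < f c then g x else 0) + (∑ x : α, if f c < f x then g x else 0) + g c
      = ∑ x : α, g x := by
  have h1 : (∑ x : α, if f x < f c then g x else 0) + (∑ x : α, if f c < f x then g x else 0)
      + (∑ x : α, if x = c then g x else 0) = ∑ x : α, g x := by
    rw [← Finset.sum_add_distrib, ← Finset.sum_add_distrib]
    refine Finset.sum_congr rfl fun x _ => ?_
    by_cases hxc : x = c
    · subst hxc; simp
    · have : f x ≠ f c := fun h => hxc (hf _ _ h)
      simp only [if_neg hxc]
      rcases lt_trichotomy (f x) (f c) with h | h | h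
      · simp [h, not_lt.2 (le_of_lt h), lt_asymm h]
      · exact absurd h this
      · simp [h, not_lt.2 (le_of_lt h)]
  rw [← h1, Finset.sum_ite_eq' Finset.univ c g, if_pos (Finset.mem_univ c)]

lemma trichotomy_card (S : Finset α) (f : α → ℕ) (hf : ∀ a b, f a = f b → a = b)
    {c : α} (hc : c ∈ S) :
    (S.filter (fun z => f z < f c)).card + (S.filter (fun z => f c < f z)).card + 1
      = S.card := by
  have hsplit := Finset.card_filter_add_card_filter_not
    (s := S) (p := fun z => f z < f c)
  have hset : S.filter (fun z => ¬ f z < f c) = insert c (S.filter (fun z => f c < f z)) := by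
    ext z
    simp only [Finset.mem_filter, Finset.mem_insert, not_lt]
    constructor
    · rintro ⟨hzS, hzc⟩
      rcases lt_or_eq_of_le hzc with h | h
      · exact Or.inr ⟨hzS, h⟩
      · exact Or.inl (hf _ _ h.symm)
    · rintro (rfl | ⟨hzS, h⟩)
      · exact ⟨hc, le_refl _⟩
      · exact ⟨hzS, le_of_lt h⟩
  rw [hset, Finset.card_insert_of_notMem (by simp)] at hsplit
  omega

end Util

namespace AllowableSeq

variable {n : ℕ}

/-- Abbreviation for the half-period. -/
def hp (n : ℕ) : ℤ := (n.choose 2 : ℤ)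

lemma pos_period (A : AllowableSeq n) (t : ℤ) :
    A.pos (t + 2 * hp n) = A.pos t := by
  have h1 := A.rev t
  have h2 := A.rev (t + (n.choose 2 : ℤ))
  have he : t + 2 * hp n = t + (n.choose 2 : ℤ) + (n.choose 2 : ℤ) := by
    unfold hp; ring
  rw [he, h2, h1]
  exact Equiv.ext fun x => by simp [Fin.rev_rev]

lemma pos_add_even (A : AllowableSeq n) (t : ℤ) (m : ℤ) :
    A.pos (t + 2 * m * hp n) = A.pos t := by
  induction m using Int.induction_on with
  | zero => simp
  | succ m ih =>
    have he : t + 2 * (m + 1) * hp n = (t + 2 * m * hp n) + 2 * hp n := by ring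
    rw [he, pos_period, ih]
  | pred m ih =>
    have h2 := A.pos_period (t + 2 * (-(m : ℤ) - 1) * hp n)
    have he : t + 2 * (-(m : ℤ) - 1) * hp n + 2 * hp n = t + 2 * (-(m : ℤ)) * hp n := by ring
    rw [he] at h2
    exact h2.symm.trans ih

lemma pos_add_odd (A : AllowableSeq n) (t : ℤ) (m : ℤ) :
    A.pos (t + (2 * m + 1) * hp n) = (A.pos t).trans Fin.revPerm := by
  have he : t + (2 * m + 1) * hp n = (t + 2 * m * hp n) + (n.choose 2 : ℤ) := by
    unfold hp; ring
  rw [he, A.rev, pos_add_even]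

/-- The unordered pair swapped by `τ_{t+1}`. -/
noncomputable def swp (A : AllowableSeq n) (t : ℤ) : Sym2 (Fin n) :=
  s((A.adj t).choose, (A.adj t).choose_spec.choose)

lemma swp_spec (A : AllowableSeq n) (t : ℤ) :
    ∃ p q : Fin n, A.swp t = s(p, q) ∧ A.SwapsAt t p q ∧
      (A.pos t q : ℕ) = (A.pos t p : ℕ) + 1 := by
  obtain ⟨h1, h2⟩ := (A.adj t).choose_spec.choose_spec
  refine ⟨_, _, rfl, ⟨?_, h2⟩, h1⟩
  intro he
  have h3 := congrArg (fun z => ((A.pos t z : ℕ))) he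
  omega

lemma swapsAt_sym2_unique (A : AllowableSeq n) {t : ℤ} {p q u v : Fin n}
    (h1 : A.SwapsAt t p q) (h2 : A.SwapsAt t u v) : s(p, q) = s(u, v) := by
  have hsw : Equiv.swap p q = Equiv.swap u v := by
    have h := h1.2.symm.trans h2.2
    refine Equiv.ext fun x => (A.pos t).injective ?_
    have := congrArg (fun e => e x) h
    simpa using this
  have hq : Equiv.swap u v p = q := by rw [← hsw, Equiv.swap_apply_left]
  by_cases hpu : p = u
  · subst hpu
    rw [Equiv.swap_apply_left] at hq
    rw [hq]
  · by_cases hpv : p = v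
    · subst hpv
      rw [Equiv.swap_apply_right] at hq
      rw [← hq, Sym2.eq_swap]
    · rw [Equiv.swap_apply_of_ne_of_ne hpu hpv] at hq
      exact absurd hq h1.1

lemma swp_eq_of_swapsAt (A : AllowableSeq n) {t : ℤ} {p q : Fin n}
    (h : A.SwapsAt t p q) : A.swp t = s(p, q) := by
  obtain ⟨u, v, he, hs, _⟩ := A.swp_spec t
  rw [he]
  exact A.swapsAt_sym2_unique hs h

lemma pos_succ_apply (A : AllowableSeq n) {t : ℤ} {p q : Fin n}
    (h : A.SwapsAt t p q) (x : Fin n) :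
    A.pos (t + 1) x = A.pos t (Equiv.swap p q x) := by
  rw [h.2]; rfl

lemma posval_inj (A : AllowableSeq n) {t : ℤ} {x y : Fin n}
    (h : (A.pos t x : ℕ) = (A.pos t y : ℕ)) : x = y :=
  (A.pos t).injective (Fin.val_injective h)

lemma flip_of_swp (A : AllowableSeq n) {t : ℤ} {u v : Fin n} (huv : u ≠ v)
    (h : A.swp t = s(u, v)) :
    ((A.pos (t + 1) u : ℕ) < (A.pos (t + 1) v : ℕ) ↔
      ¬ ((A.pos t u : ℕ) < (A.pos t v : ℕ))) := by
  obtain ⟨p, q, he, hs, _⟩ := A.swp_spec t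
  rw [he] at h
  have hne : (A.pos t u : ℕ) ≠ (A.pos t v : ℕ) := fun hc => huv (A.posval_inj hc)
  rcases Sym2.eq_iff.1 h with ⟨rfl, rfl⟩ | ⟨rfl, rfl⟩ <;>
    simp only [A.pos_succ_apply hs, Equiv.swap_apply_left, Equiv.swap_apply_right] <;>
    omega

lemma noflip_of_swp (A : AllowableSeq n) {t : ℤ} {u v : Fin n} (huv : u ≠ v)
    (h : A.swp t ≠ s(u, v)) :
    ((A.pos (t + 1) u : ℕ) < (A.pos (t + 1) v : ℕ) ↔
      ((A.pos t u : ℕ) < (A.pos t v : ℕ))) := by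
  obtain ⟨p, q, he, hs, hq1⟩ := A.swp_spec t
  rw [he] at h
  have hpq : p ≠ q := hs.1
  have hru := A.pos_succ_apply hs u
  have hrv := A.pos_succ_apply hs v
  have hnuv : ¬(u = p ∧ v = q) ∧ ¬(u = q ∧ v = p) := by
    constructor
    · rintro ⟨rfl, rfl⟩; exact h rfl
    · rintro ⟨rfl, rfl⟩; exact h (Sym2.eq_swap)
  by_cases hup : u = p
  · subst hup
    have hvq : v ≠ q := fun hc => hnuv.1 ⟨rfl, hc⟩
    have hvu : v ≠ u := huv.symm
    rw [hru, hrv, Equiv.swap_apply_left, Equiv.swap_apply_of_ne_of_ne hvu hvq]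
    have h1 : (A.pos t v : ℕ) ≠ (A.pos t u : ℕ) := fun hc => hvu (A.posval_inj hc)
    have h2 : (A.pos t v : ℕ) ≠ (A.pos t q : ℕ) := fun hc => hvq (A.posval_inj hc)
    omega
  · by_cases huq : u = q
    · subst huq
      have hvp : v ≠ p := fun hc => hnuv.2 ⟨rfl, hc⟩
      have hvu : v ≠ u := huv.symm
      rw [hru, hrv, Equiv.swap_apply_right, Equiv.swap_apply_of_ne_of_ne hvp hvu]
      have h1 : (A.pos t v : ℕ) ≠ (A.pos t u : ℕ) := fun hc => hvu (A.posval_inj hc)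
      have h2 : (A.pos t v : ℕ) ≠ (A.pos t p : ℕ) := fun hc => hvp (A.posval_inj hc)
      omega
    · rw [hru, Equiv.swap_apply_of_ne_of_ne hup huq]
      by_cases hvp : v = p
      · subst hvp
        rw [hrv, Equiv.swap_apply_left]
        have h1 : (A.pos t u : ℕ) ≠ (A.pos t v : ℕ) := fun hc => huv (A.posval_inj hc)
        have h2 : (A.pos t u : ℕ) ≠ (A.pos t q : ℕ) := fun hc => huq (A.posval_inj hc)
        omega
      · by_cases hvq : v = q
        · subst hvq
          rw [hrv, Equiv.swap_apply_right]
          have h1 : (A.pos t u : ℕ) ≠ (A.pos t v : ℕ) := fun hc => huv (A.posval_inj hc)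
          have h2 : (A.pos t u : ℕ) ≠ (A.pos t p : ℕ) := fun hc => hup (A.posval_inj hc)
          omega
        · rw [hrv, Equiv.swap_apply_of_ne_of_ne hvp hvq]

lemma ord_const (A : AllowableSeq n) {u v : Fin n} (huv : u ≠ v) :
    ∀ (N : ℕ) (t0 : ℤ), (∀ s : ℤ, t0 ≤ s → s < t0 + N → A.swp s ≠ s(u, v)) →
      (((A.pos (t0 + N) u : ℕ) < (A.pos (t0 + N) v : ℕ)) ↔
        ((A.pos t0 u : ℕ) < (A.pos t0 v : ℕ))) := by
  intro N
  induction N with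
  | zero => intro t0 _; norm_num
  | succ N ih =>
    intro t0 h
    have he : t0 + ((N : ℤ) + 1) = (t0 + N) + 1 := by ring
    push_cast
    rw [he]
    rw [A.noflip_of_swp huv (h (t0 + N) (by omega) (by push_cast; omega))]
    exact ih t0 (fun s h1 h2 => h s h1 (by push_cast at h2 ⊢; omega))

lemma rev_ord (A : AllowableSeq n) (t : ℤ) (u v : Fin n) :
    ((A.pos (t + hp n) u : ℕ) < (A.pos (t + hp n) v : ℕ)) ↔
      ((A.pos t v : ℕ) < (A.pos t u : ℕ)) := by
  unfold hp
  rw [A.rev t]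
  simp only [Equiv.trans_apply, Fin.revPerm_apply]
  rw [← Fin.lt_def, ← Fin.lt_def, Fin.rev_lt_rev, Fin.lt_def]

lemma exists_swap_in_window (A : AllowableSeq n) {u v : Fin n} (huv : u ≠ v) (t0 : ℤ) :
    ∃ s : ℤ, t0 ≤ s ∧ s < t0 + hp n ∧ A.swp s = s(u, v) := by
  by_contra hcon
  push_neg at hcon
  have h1 := A.ord_const huv (n.choose 2) t0
    (fun s hs1 hs2 => hcon s hs1 (by exact hs2))
  have h2 := A.rev_ord t0 u v
  have hne : (A.pos t0 u : ℕ) ≠ (A.pos t0 v : ℕ) := fun hc => huv (A.posval_inj hc)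
  unfold hp at h2
  rw [h1] at h2
  omega

lemma window_injOn (A : AllowableSeq n) (t0 : ℤ) :
    Set.InjOn A.swp (Finset.Ico t0 (t0 + hp n)) := by
  classical
  apply Finset.injOn_of_card_image_eq
  have hsub : (Finset.Ico t0 (t0 + hp n)).image A.swp =
      Finset.univ.filter (fun z : Sym2 (Fin n) => ¬ z.IsDiag) := by
    apply Finset.Subset.antisymm
    · intro z hz
      rw [Finset.mem_image] at hz
      obtain ⟨s, _, rfl⟩ := hz
      obtain ⟨p, q, he, hs, _⟩ := A.swp_spec s
      rw [Finset.mem_filter, he]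
      exact ⟨Finset.mem_univ _, by rw [Sym2.mk_isDiag_iff]; exact hs.1⟩
    · intro z hz
      rw [Finset.mem_filter] at hz
      induction z using Sym2.ind with
      | _ u v =>
        have huv : u ≠ v := fun he => hz.2 (by rw [Sym2.mk_isDiag_iff]; exact he)
        obtain ⟨s, h1, h2, h3⟩ := A.exists_swap_in_window huv t0
        exact Finset.mem_image.2 ⟨s, Finset.mem_Ico.2 ⟨h1, h2⟩, h3⟩
  rw [hsub]
  have h1 : (Finset.univ.filter (fun z : Sym2 (Fin n) => ¬ z.IsDiag)).card
      = n.choose 2 := by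
    rw [← Fintype.card_subtype]
    rw [Sym2.card_subtype_not_diag, Fintype.card_fin]
  rw [h1, Int.card_Ico]
  unfold hp
  omega

lemma hp_pos_of_ne {u v : Fin n} (huv : u ≠ v) : 0 < hp n := by
  have h2n : 2 ≤ n := by
    by_contra hn
    push_neg at hn
    have hu := u.isLt
    have hv := v.isLt
    exact huv (Fin.ext (by omega))
  have := Nat.choose_pos h2n
  unfold hp
  omega

lemma swap_next (A : AllowableSeq n) {u v : Fin n} (huv : u ≠ v) {t : ℤ}
    (h : A.swp t = s(u, v)) :
    A.swp (t + hp n) = s(u, v) ∧ ∀ s : ℤ, t < s → s < t + hp n → A.swp s ≠ s(u, v) := by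
  have hC : 0 < hp n := hp_pos_of_ne huv
  have huniq := A.window_injOn t
  constructor
  · obtain ⟨σ, h1, h2, h3⟩ := A.exists_swap_in_window huv (t + 1)
    have hσ : ¬ σ < t + hp n := by
      intro hlt
      have : σ = t := huniq (by simp [Finset.mem_Ico]; omega)
        (by simp [Finset.mem_Ico]; omega) (h3.trans h.symm)
      omega
    have : σ = t + hp n := by omega
    rwa [← this]
  · intro s h1 h2 hs
    have : s = t := huniq (by simp [Finset.mem_Ico]; omega)
      (by simp [Finset.mem_Ico]; omega) (hs.trans h.symm)
    omega

lemma swap_prev (A : AllowableSeq n) {u v : Fin n} (huv : u ≠ v) {t : ℤ}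
    (h : A.swp t = s(u, v)) : A.swp (t - hp n) = s(u, v) := by
  obtain ⟨σ, h1, h2, h3⟩ := A.exists_swap_in_window huv (t - hp n)
  have hnext := (A.swap_next huv h3).1
  have huniq := A.window_injOn t
  have hCC : t - hp n + hp n = t := by ring
  rw [hCC] at h2
  have hC : 0 < hp n := hp_pos_of_ne huv
  have : σ + hp n = t := huniq (by simp [Finset.mem_Ico]; omega)
    (by simp [Finset.mem_Ico]; omega)
    (hnext.trans h.symm)
  rw [← this] at h ⊢
  have he : σ + hp n - hp n = σ := by ring
  rwa [he]

lemma swap_times (A : AllowableSeq n) {u v : Fin n} (huv : u ≠ v) {t t' : ℤ}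
    (h : A.swp t = s(u, v)) (h' : A.swp t' = s(u, v)) :
    ∃ j : ℤ, t' = t + j * hp n := by
  have hC : 0 < hp n := hp_pos_of_ne huv
  have hiter : ∀ j : ℤ, A.swp (t + j * hp n) = s(u, v) := by
    intro j
    induction j using Int.induction_on with
    | zero => simpa using h
    | succ j ih =>
      have he : t + (j + 1) * hp n = (t + j * hp n) + hp n := by ring
      rw [he]
      exact (A.swap_next huv ih).1
    | pred j ih =>
      have he : t + (-j - 1) * hp n = (t + -j * hp n) - hp n := by ring
      rw [he]
      exact A.swap_prev huv ih
  refine ⟨(t' - t) / hp n, ?_⟩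
  set j := (t' - t) / hp n with hj
  have hr1 : 0 ≤ (t' - t) % hp n := Int.emod_nonneg _ (by omega)
  have hr2 : (t' - t) % hp n < hp n := Int.emod_lt_of_pos _ hC
  have hkey : t + j * hp n = t' - (t' - t) % hp n := by
    have hd := Int.mul_ediv_add_emod (t' - t) (hp n)
    rw [hj, mul_comm]
    linarith
  have huniq := A.window_injOn (t + j * hp n)
  have : t' = t + j * hp n := huniq
    (by rw [hkey]; simp [Finset.mem_Ico]; omega)
    (by rw [hkey]; simp [Finset.mem_Ico]; omega) (h'.trans (hiter j).symm)
  exact this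

lemma swap_times_pos (A : AllowableSeq n) {u v : Fin n} (huv : u ≠ v) {t t' : ℤ}
    (h : A.swp t = s(u, v)) (h' : A.swp t' = s(u, v)) :
    A.pos t' = A.pos t ∨ A.pos t' = (A.pos t).trans Fin.revPerm := by
  obtain ⟨j, rfl⟩ := A.swap_times huv h h'
  rcases Int.even_or_odd j with ⟨m, hm⟩ | ⟨m, hm⟩
  · left
    have he : t + j * hp n = t + 2 * m * hp n := by rw [hm]; ring
    rw [he, A.pos_add_even]
  · right
    have he : t + j * hp n = t + (2 * m + 1) * hp n := by rw [hm]
    rw [he, A.pos_add_odd]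

end AllowableSeq

namespace AllowableSeq

variable {n : ℕ}

/-- The set of blue points. -/
def Blues (blue : Fin n → Bool) : Finset (Fin n) :=
  Finset.univ.filter (fun x => blue x = true)

/-- Number of blue points at positions `< M` at time `t`. -/
def lcnt (A : AllowableSeq n) (blue : Fin n → Bool) (t : ℤ) (M : ℕ) : ℕ :=
  ((Blues blue).filter (fun y => (A.pos t y : ℕ) < M)).card

/-- Total weight of the points at positions `< M` at time `t`. -/
def lsum (A : AllowableSeq n) (blue : Fin n → Bool) (t : ℤ) (M : ℕ) : ℤ :=
  ∑ x : Fin n, if (A.pos t x : ℕ) < M then wt blue x else 0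

/-- Number of blue points strictly to the left of `x` at time `t`. -/
def cnt (A : AllowableSeq n) (blue : Fin n → Bool) (t : ℤ) (x : Fin n) : ℕ :=
  lcnt A blue t (A.pos t x : ℕ)

lemma cweight_eq_lsum (A : AllowableSeq n) (blue : Fin n → Bool) (γ : ℤ → Fin n) (t : ℤ) :
    A.cweight blue γ t = lsum A blue t ((A.pos t (γ t) : ℕ)) := by
  refine Finset.sum_congr rfl fun x _ => ?_
  exact if_congr Fin.lt_def rfl rfl

lemma kth_eq (A : AllowableSeq n) (blue : Fin n → Bool) {t : ℤ} {x y : Fin n}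
    (hx : x ∈ Blues blue) (hy : y ∈ Blues blue)
    (h : cnt A blue t x = cnt A blue t y) : x = y :=
  kth_unique_s9 (Blues blue) (fun z => (A.pos t z : ℕ)) (fun _ _ hab => A.posval_inj hab)
    hx hy h

lemma kth_exists' (A : AllowableSeq n) (blue : Fin n → Bool) (t : ℤ) (j : ℕ)
    (hj : j < (Blues blue).card) : ∃ x ∈ Blues blue, cnt A blue t x = j :=
  kth_exists (Blues blue) (fun z => (A.pos t z : ℕ)) (fun _ _ hab => A.posval_inj hab) j hj

lemma lsum_succ (A : AllowableSeq n) (blue : Fin n → Bool) (t : ℤ) (M : ℕ) (hM : M < n) :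
    lsum A blue t (M + 1) = lsum A blue t M + wt blue ((A.pos t).symm ⟨M, hM⟩) := by
  have h1 : lsum A blue t (M + 1) = lsum A blue t M +
      ∑ x : Fin n, if (A.pos t x : ℕ) = M then wt blue x else 0 := by
    unfold lsum
    rw [← Finset.sum_add_distrib]
    refine Finset.sum_congr rfl fun x _ => ?_
    split_ifs <;> omega
  rw [h1]
  have h2 : ∀ x : Fin n, ((A.pos t x : ℕ) = M) ↔ (x = (A.pos t).symm ⟨M, hM⟩) := by
    intro x
    rw [Equiv.eq_symm_apply]
    constructor
    · intro h; exact Fin.ext h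
    · intro h; rw [h]
  have h3 : (∑ x : Fin n, if (A.pos t x : ℕ) = M then wt blue x else 0)
      = wt blue ((A.pos t).symm ⟨M, hM⟩) := by
    rw [Finset.sum_congr rfl (fun x _ => by rw [if_congr (h2 x) rfl rfl])]
    rw [Finset.sum_ite_eq' Finset.univ _ (wt blue), if_pos (Finset.mem_univ _)]
  rw [h3]

lemma lcnt_succ (A : AllowableSeq n) (blue : Fin n → Bool) (t : ℤ) (M : ℕ) (hM : M < n) :
    lcnt A blue t (M + 1) = lcnt A blue t M +
      (if blue ((A.pos t).symm ⟨M, hM⟩) = true then 1 else 0) := by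
  classical
  set c := (A.pos t).symm ⟨M, hM⟩ with hc
  have hcv : (A.pos t c : ℕ) = M := by rw [hc]; simp
  have hsplit : (Blues blue).filter (fun y => (A.pos t y : ℕ) < M + 1)
      = ((Blues blue).filter (fun y => (A.pos t y : ℕ) < M)) ∪
        ((Blues blue).filter (fun y => (A.pos t y : ℕ) = M)) := by
    ext z
    simp only [Finset.mem_filter, Finset.mem_union]
    constructor
    · rintro ⟨h1, h2⟩
      rcases Nat.lt_or_ge (A.pos t z : ℕ) M with h | h
      · exact Or.inl ⟨h1, h⟩
      · exact Or.inr ⟨h1, by omega⟩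
    · rintro (⟨h1, h2⟩ | ⟨h1, h2⟩) <;> exact ⟨h1, by omega⟩
  have hdisj : Disjoint ((Blues blue).filter (fun y => (A.pos t y : ℕ) < M))
      ((Blues blue).filter (fun y => (A.pos t y : ℕ) = M)) := by
    rw [Finset.disjoint_left]
    intro z h1 h2
    rw [Finset.mem_filter] at h1 h2
    omega
  have hsec : (Blues blue).filter (fun y => (A.pos t y : ℕ) = M)
      = if blue c = true then {c} else ∅ := by
    ext z
    have hzc : ((A.pos t z : ℕ) = M) ↔ z = c := by
      constructor
      · intro h
        apply A.posval_inj
        rw [hcv, h]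
      · intro h; rw [h, hcv]
    split_ifs with hb
    · simp only [Finset.mem_filter, Finset.mem_singleton, Blues, true_and]
      constructor
      · rintro ⟨_, h2⟩; exact hzc.1 h2
      · intro h; subst h; exact ⟨by simp [hb], hcv⟩
    · simp only [Finset.mem_filter, Finset.notMem_empty, iff_false]
      rintro ⟨h1, h2⟩
      rw [hzc] at h2
      subst h2
      simp only [Blues, Finset.mem_filter] at h1
      exact hb h1.2
  unfold lcnt
  rw [hsplit, Finset.card_union_of_disjoint hdisj, hsec]
  split_ifs <;> simp

lemma lsum_step (A : AllowableSeq n) (blue : Fin n → Bool) {t : ℤ} {p q : Fin n}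
    (hs : A.SwapsAt t p q) (hq1 : (A.pos t q : ℕ) = (A.pos t p : ℕ) + 1)
    {M : ℕ} (hM : M ≠ (A.pos t p : ℕ) + 1) :
    lsum A blue (t + 1) M = lsum A blue t M := by
  refine Finset.sum_congr rfl fun x _ => ?_
  rw [A.pos_succ_apply hs x]
  by_cases hxp : x = p
  · subst hxp
    rw [Equiv.swap_apply_left]
    split_ifs <;> omega
  · by_cases hxq : x = q
    · subst hxq
      rw [Equiv.swap_apply_right]
      split_ifs <;> omega
    · rw [Equiv.swap_apply_of_ne_of_ne hxp hxq]

lemma lcnt_step (A : AllowableSeq n) (blue : Fin n → Bool) {t : ℤ} {p q : Fin n}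
    (hs : A.SwapsAt t p q) (hq1 : (A.pos t q : ℕ) = (A.pos t p : ℕ) + 1)
    {M : ℕ} (hM : M ≠ (A.pos t p : ℕ) + 1) :
    lcnt A blue (t + 1) M = lcnt A blue t M := by
  unfold lcnt
  congr 1
  refine Finset.filter_congr fun x _ => ?_
  rw [A.pos_succ_apply hs x]
  by_cases hxp : x = p
  · subst hxp
    rw [Equiv.swap_apply_left]
    constructor <;> (intro; omega)
  · by_cases hxq : x = q
    · subst hxq
      rw [Equiv.swap_apply_right]
      constructor <;> (intro; omega)
    · rw [Equiv.swap_apply_of_ne_of_ne hxp hxq]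

lemma swapsAt_comm (A : AllowableSeq n) {t : ℤ} {p q : Fin n}
    (h : A.SwapsAt t p q) : A.SwapsAt t q p :=
  ⟨h.1.symm, by rw [Equiv.swap_comm]; exact h.2⟩

/-- The main local analysis: across one time step, either the weight of a `k`-th-blue
curve is unchanged, or the curve point swaps with a red point and all data is explicit. -/
lemma step_main (A : AllowableSeq n) (blue : Fin n → Bool) {j : ℕ} {γ : ℤ → Fin n}
    (hγ : ∀ s : ℤ, γ s ∈ Blues blue ∧ cnt A blue s (γ s) = j) (t : ℤ) :
    (A.cweight blue γ (t + 1) = A.cweight blue γ t) ∨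
    ∃ ρ : Fin n, blue ρ = false ∧ γ (t + 1) = γ t ∧ A.SwapsAt t (γ t) ρ ∧
      (((A.pos t ρ : ℕ) + 1 = (A.pos t (γ t) : ℕ) ∧
          A.cweight blue γ (t + 1) = A.cweight blue γ t + 1 ∧
          lsum A blue t (A.pos t ρ : ℕ) = A.cweight blue γ (t + 1)) ∨
       ((A.pos t (γ t) : ℕ) + 1 = (A.pos t ρ : ℕ) ∧
          A.cweight blue γ t = A.cweight blue γ (t + 1) + 1 ∧
          lsum A blue t (A.pos t (γ t) : ℕ) = A.cweight blue γ t)) := by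
  classical
  obtain ⟨p, q, hpair, hs, hq1⟩ := A.swp_spec t
  set m := (A.pos t p : ℕ) with hm
  have hmn : m < n := (A.pos t p).isLt
  have hpp : (A.pos (t + 1) p : ℕ) = m + 1 := by
    rw [A.pos_succ_apply hs p, Equiv.swap_apply_left]; exact hq1
  have hqq : (A.pos (t + 1) q : ℕ) = m := by
    rw [A.pos_succ_apply hs q, Equiv.swap_apply_right]
  have hoth : ∀ x : Fin n, x ≠ p → x ≠ q → A.pos (t + 1) x = A.pos t x := by
    intro x h1 h2
    rw [A.pos_succ_apply hs x, Equiv.swap_apply_of_ne_of_ne h1 h2]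
  have hptq : (A.pos (t + 1)).symm ⟨m, hmn⟩ = q := by
    rw [Equiv.symm_apply_eq]
    exact Fin.ext hqq.symm
  have hptp : (A.pos t).symm ⟨m, hmn⟩ = p := by
    rw [Equiv.symm_apply_eq]
  have hw := cweight_eq_lsum A blue γ t
  have hw' := cweight_eq_lsum A blue γ (t + 1)
  have hcm := hγ t
  have hcm' := hγ (t + 1)
  by_cases hgp : γ t = p
  · have hjp : lcnt A blue t m = j := by
      have h0 := hcm.2
      rw [hgp] at h0
      unfold cnt at h0
      rw [← hm] at h0
      exact h0
    by_cases hbq : blue q = true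
    · -- blue-blue swap, γ (t+1) = q, weight unchanged
      left
      have hqB : q ∈ Blues blue := by simp [Blues, hbq]
      have hcnt : cnt A blue (t + 1) q = j := by
        show lcnt A blue (t + 1) (A.pos (t + 1) q : ℕ) = j
        rw [hqq, A.lcnt_step blue hs hq1 (by omega)]
        exact hjp
      have hγ1 : γ (t + 1) = q := kth_eq A blue hcm'.1 hqB (by rw [hcm'.2, hcnt])
      rw [hw, hw', hγ1, hgp, hqq, ← hm]
      exact A.lsum_step blue hs hq1 (M := m) (by omega)
    · -- γ t = p moves right past red q : weight decreases
      right
      have hbq' : blue q = false := by simpa using hbq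
      have hcnt : cnt A blue (t + 1) p = j := by
        show lcnt A blue (t + 1) (A.pos (t + 1) p : ℕ) = j
        rw [hpp, A.lcnt_succ blue (t + 1) m hmn, hptq, hbq',
          A.lcnt_step blue hs hq1 (M := m) (by omega)]
        simpa using hjp
      have hγ1 : γ (t + 1) = p := kth_eq A blue hcm'.1 (by rw [← hgp]; exact hcm.1)
        (by rw [hcm'.2, hcnt])
      have hws : A.cweight blue γ t = A.cweight blue γ (t + 1) + 1 := by
        rw [hw, hw', hγ1, hgp, hpp, ← hm]
        rw [A.lsum_succ blue (t + 1) m hmn, hptq]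
        rw [A.lsum_step blue hs hq1 (M := m) (by omega)]
        unfold wt
        rw [hbq']
        simp
      refine ⟨q, hbq', by rw [hγ1, hgp], by rw [hgp]; exact hs,
        Or.inr ⟨by rw [hgp, hq1, ← hm], hws, hw.symm⟩⟩
  · by_cases hgq : γ t = q
    · have hbq2 : blue q = true := by
        have h0 := hcm.1
        rw [hgq, Blues, Finset.mem_filter] at h0
        exact h0.2
      have hjq : lcnt A blue t (m + 1) = j := by
        have h0 := hcm.2
        rw [hgq] at h0
        unfold cnt at h0
        rw [hq1] at h0
        exact h0
      by_cases hbp : blue p = true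
      · -- blue-blue swap, γ (t+1) = p, weight unchanged
        left
        have hpB : p ∈ Blues blue := by simp [Blues, hbp]
        have hcnt : cnt A blue (t + 1) p = j := by
          show lcnt A blue (t + 1) (A.pos (t + 1) p : ℕ) = j
          rw [hpp, A.lcnt_succ blue (t + 1) m hmn, hptq,
            A.lcnt_step blue hs hq1 (M := m) (by omega)]
          have h2 := A.lcnt_succ blue t m hmn
          rw [hptp] at h2
          rw [h2] at hjq
          rw [hbq2]
          rw [hbp] at hjq
          omega
        have hγ1 : γ (t + 1) = p := kth_eq A blue hcm'.1 hpB (by rw [hcm'.2, hcnt])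
        rw [hw, hw', hγ1, hgq, hpp, hq1]
        rw [A.lsum_succ blue (t + 1) m hmn, hptq, A.lsum_succ blue t m hmn, hptp,
          A.lsum_step blue hs hq1 (M := m) (by omega)]
        unfold wt
        rw [hbq2, hbp]
      · -- red p moves right past γ t = q : weight increases
        right
        have hbp' : blue p = false := by simpa using hbp
        have hjm : lcnt A blue t m = j := by
          have h2 := A.lcnt_succ blue t m hmn
          rw [hptp, hbp'] at h2
          rw [h2] at hjq
          simpa using hjq
        have hcnt : cnt A blue (t + 1) q = j := by
          show lcnt A blue (t + 1) (A.pos (t + 1) q : ℕ) = j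
          rw [hqq, A.lcnt_step blue hs hq1 (M := m) (by omega)]
          exact hjm
        have hγ1 : γ (t + 1) = q := kth_eq A blue hcm'.1 (by rw [← hgq]; exact hcm.1)
          (by rw [hcm'.2, hcnt])
        have hws : A.cweight blue γ (t + 1) = A.cweight blue γ t + 1 := by
          rw [hw, hw', hγ1, hgq, hqq, hq1]
          rw [A.lsum_succ blue t m hmn, hptp,
            A.lsum_step blue hs hq1 (M := m) (by omega)]
          unfold wt
          rw [hbp']
          simp
        refine ⟨p, hbp', by rw [hγ1, hgq], by rw [hgq]; exact A.swapsAt_comm hs,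
          Or.inl ⟨by rw [hgq, hq1, ← hm], hws, ?_⟩⟩
        rw [← hm, hw', hγ1, hqq]
        exact (A.lsum_step blue hs hq1 (M := m) (by omega)).symm
    · -- swap does not involve the curve point
      left
      have hMne : (A.pos t (γ t) : ℕ) ≠ m + 1 := by
        rw [← hq1]
        exact fun hc => hgq (A.posval_inj hc)
      have hpe : A.pos (t + 1) (γ t) = A.pos t (γ t) := hoth _ hgp hgq
      have hcnt : cnt A blue (t + 1) (γ t) = j := by
        show lcnt A blue (t + 1) (A.pos (t + 1) (γ t) : ℕ) = j
        rw [hpe, A.lcnt_step blue hs hq1 hMne]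
        exact hcm.2
      have hγ1 : γ (t + 1) = γ t := kth_eq A blue hcm'.1 hcm.1 (by rw [hcm'.2, hcnt])
      rw [hw, hw', hγ1, hpe]
      exact A.lsum_step blue hs hq1 hMne

end AllowableSeq

section IVT

lemma ivt_up (w : ℤ → ℤ) (δ : ℤ)
    (hstep : ∀ t : ℤ, w (t + 1) = w t ∨ w (t + 1) = w t + 1 ∨ w t = w (t + 1) + 1) :
    ∀ (N : ℕ) (a : ℤ), w a < δ → δ ≤ w (a + N) →
      ∃ t : ℤ, w t = δ - 1 ∧ w (t + 1) = δ := by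
  intro N
  induction N with
  | zero =>
    intro a h1 h2
    norm_num at h2
    omega
  | succ N ih =>
    intro a h1 h2
    by_cases hc : w (a + 1) < δ
    · have he : a + 1 + (N : ℤ) = a + ((N : ℕ) + 1 : ℕ) := by push_cast; ring
      exact ih (a + 1) hc (by rw [he]; exact h2)
    · push_neg at hc
      have hst := hstep a
      exact ⟨a, by omega, by omega⟩

lemma ivt_down (w : ℤ → ℤ) (δ : ℤ)
    (hstep : ∀ t : ℤ, w (t + 1) = w t ∨ w (t + 1) = w t + 1 ∨ w t = w (t + 1) + 1) :
    ∀ (N : ℕ) (a : ℤ), δ ≤ w a → w (a + N) < δ →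
      ∃ t : ℤ, w t = δ ∧ w (t + 1) = δ - 1 := by
  intro N
  induction N with
  | zero =>
    intro a h1 h2
    norm_num at h2
    omega
  | succ N ih =>
    intro a h1 h2
    by_cases hc : δ ≤ w (a + 1)
    · have he : a + 1 + (N : ℤ) = a + ((N : ℕ) + 1 : ℕ) := by push_cast; ring
      exact ih (a + 1) hc (by rw [he]; exact h2)
    · push_neg at hc
      have hst := hstep a
      exact ⟨a, by omega, by omega⟩

lemma periodic_iter (w : ℤ → ℤ) (T : ℤ) (hper : ∀ t : ℤ, w (t + T) = w t) :
    ∀ (k : ℕ) (t : ℤ), w (t + k * T) = w t := by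
  intro k
  induction k with
  | zero => intro t; norm_num
  | succ k ih =>
    intro t
    have he : t + ((k : ℤ) + 1) * T = (t + k * T) + T := by ring
    push_cast
    rw [he, hper, ih]

/-- From any low value and any high value, both an up-crossing and a down-crossing exist,
using periodicity. -/
lemma ivt_both (w : ℤ → ℤ) (δ : ℤ) (T : ℤ) (hT : 0 < T)
    (hper : ∀ t : ℤ, w (t + T) = w t)
    (hstep : ∀ t : ℤ, w (t + 1) = w t ∨ w (t + 1) = w t + 1 ∨ w t = w (t + 1) + 1)
    (t1 t2 : ℤ) (h1 : w t1 < δ) (h2 : δ ≤ w t2) :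
    (∃ t : ℤ, w t = δ - 1 ∧ w (t + 1) = δ) ∧
    (∃ t : ℤ, w t = δ ∧ w (t + 1) = δ - 1) := by
  constructor
  · -- up-crossing: from t1 to a translate of t2 that is ≥ t1
    set k : ℕ := (t1 - t2).toNat with hk
    have hge : t1 ≤ t2 + k * T := by
      have h1k : (k : ℤ) ≤ (k : ℤ) * T := by nlinarith [Int.natCast_nonneg k]
      have : t1 - t2 ≤ (k : ℤ) := Int.self_le_toNat _
      omega
    have hw2 : w (t2 + k * T) = w t2 := periodic_iter w T hper k t2
    set N : ℕ := (t2 + k * T - t1).toNat with hN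
    have hNe : t1 + (N : ℤ) = t2 + k * T := by
      rw [hN, Int.toNat_of_nonneg (by omega)]
      ring
    exact ivt_up w δ hstep N t1 h1 (by rw [hNe, hw2]; exact h2)
  · set k : ℕ := (t2 - t1).toNat with hk
    have hge : t2 ≤ t1 + k * T := by
      have h1k : (k : ℤ) ≤ (k : ℤ) * T := by nlinarith [Int.natCast_nonneg k]
      have : t2 - t1 ≤ (k : ℤ) := Int.self_le_toNat _
      omega
    have hw1 : w (t1 + k * T) = w t1 := periodic_iter w T hper k t1
    set N : ℕ := (t1 + k * T - t2).toNat with hN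
    have hNe : t2 + (N : ℤ) = t1 + k * T := by
      rw [hN, Int.toNat_of_nonneg (by omega)]
      ring
    exact ivt_down w δ hstep N t2 h2 (by rw [hNe, hw1]; exact h1)

end IVT

namespace AllowableSeq

variable {n : ℕ}

lemma cnt_congr (A : AllowableSeq n) (blue : Fin n → Bool) {t t' : ℤ}
    (h : A.pos t' = A.pos t) (x : Fin n) : cnt A blue t' x = cnt A blue t x := by
  unfold cnt lcnt
  rw [h]

lemma cweight_congr (A : AllowableSeq n) (blue : Fin n → Bool) (γ : ℤ → Fin n) {t t' : ℤ}
    (h : A.pos t' = A.pos t) (hγ : γ t' = γ t) :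
    A.cweight blue γ t' = A.cweight blue γ t := by
  unfold cweight
  rw [h, hγ]

lemma pos_rev_val (A : AllowableSeq n) {t t' : ℤ}
    (h : A.pos t' = (A.pos t).trans Fin.revPerm) (x : Fin n) :
    (A.pos t' x : ℕ) = n - 1 - (A.pos t x : ℕ) := by
  rw [h]
  simp only [Equiv.trans_apply, Fin.revPerm_apply, Fin.val_rev]
  have := (A.pos t x).isLt
  omega

/-- Number of blues left of a blue point after an order reversal. -/
lemma cnt_rev (A : AllowableSeq n) (blue : Fin n → Bool) {t t' : ℤ}
    (h : A.pos t' = (A.pos t).trans Fin.revPerm) {β : Fin n} (hβ : β ∈ Blues blue) :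
    cnt A blue t' β + cnt A blue t β + 1 = (Blues blue).card := by
  have h1 : cnt A blue t' β
      = ((Blues blue).filter (fun y => (A.pos t β : ℕ) < (A.pos t y : ℕ))).card := by
    unfold cnt lcnt
    congr 1
    refine Finset.filter_congr fun y _ => ?_
    rw [A.pos_rev_val h y, A.pos_rev_val h β]
    have hy := (A.pos t y).isLt
    have hb := (A.pos t β).isLt
    constructor <;> (intro; omega)
  have h2 := trichotomy_card (Blues blue) (fun z => (A.pos t z : ℕ))
    (fun _ _ hab => A.posval_inj hab) hβ
  rw [h1]
  unfold cnt lcnt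
  omega

lemma sum_wt (blue : Fin n → Bool) (b r : ℕ)
    (hb : (Finset.univ.filter (fun x => blue x = true)).card = b)
    (hr : (Finset.univ.filter (fun x => blue x = false)).card = r) :
    ∑ x : Fin n, wt blue x = (b : ℤ) - r := by
  classical
  have hsplit := Finset.sum_filter_add_sum_filter_not Finset.univ
    (fun x => blue x = true) (wt blue)
  have h1 : ∑ x ∈ Finset.univ.filter (fun x => blue x = true), wt blue x = (b : ℤ) := by
    rw [Finset.sum_eq_card_nsmul (b := (1 : ℤ)) (fun x hx => by
      rw [Finset.mem_filter] at hx
      unfold wt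
      rw [hx.2]
      simp), hb]
    simp
  have h2 : ∑ x ∈ Finset.univ.filter (fun x => ¬ blue x = true), wt blue x = -(r : ℤ) := by
    have he : Finset.univ.filter (fun x : Fin n => ¬ blue x = true)
        = Finset.univ.filter (fun x => blue x = false) := by
      refine Finset.filter_congr fun x _ => ?_
      simp [Bool.not_eq_true]
    rw [he, Finset.sum_eq_card_nsmul (b := (-1 : ℤ)) (fun x hx => by
      rw [Finset.mem_filter] at hx
      unfold wt
      rw [hx.2]
      simp), hr]
    simp
  rw [← hsplit, h1, h2]
  ring

/-- Weight of a curve point after an order reversal. -/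
lemma cweight_rev (A : AllowableSeq n) (blue : Fin n → Bool) (γ : ℤ → Fin n) {t t' : ℤ}
    (h : A.pos t' = (A.pos t).trans Fin.revPerm) (hc : γ t' = γ t)
    (hcb : blue (γ t) = true) :
    A.cweight blue γ t' = (∑ x : Fin n, wt blue x) - A.cweight blue γ t - 1 := by
  have htri := trichotomy_sum (wt blue) (fun z => (A.pos t z : ℕ))
    (fun _ _ hab => A.posval_inj hab) (γ t)
  have h1 : A.cweight blue γ t'
      = ∑ x : Fin n, if (A.pos t (γ t) : ℕ) < (A.pos t x : ℕ) then wt blue x else 0 := by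
    unfold cweight
    rw [hc]
    refine Finset.sum_congr rfl fun x _ => ?_
    refine if_congr ?_ rfl rfl
    rw [Fin.lt_def]
    rw [A.pos_rev_val h x, A.pos_rev_val h (γ t)]
    have hx := (A.pos t x).isLt
    have hb := (A.pos t (γ t)).isLt
    constructor <;> (intro; omega)
  have h2 : A.cweight blue γ t
      = ∑ x : Fin n, if (A.pos t x : ℕ) < (A.pos t (γ t) : ℕ) then wt blue x else 0 := by
    unfold cweight
    refine Finset.sum_congr rfl fun x _ => ?_
    exact if_congr Fin.lt_def rfl rfl
  have h3 : wt blue (γ t) = 1 := by unfold wt; rw [hcb]; simp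
  rw [h1, h2]
  omega

end AllowableSeq

namespace AllowableSeq

variable {n : ℕ}

/-- Data of an up-crossing of the `k`-th blue curve producing the balanced pair `P`. -/
def UpProp (A : AllowableSeq n) (blue : Fin n → Bool) (δ : ℤ) (k : ℕ)
    (P : Sym2 (Fin n)) : Prop :=
  ∃ (t : ℤ) (β ρ : Fin n), P = s(β, ρ) ∧ blue β = true ∧ blue ρ = false ∧
    cnt A blue t β = k - 1 ∧ A.swp t = s(β, ρ) ∧
    (A.pos t ρ : ℕ) + 1 = (A.pos t β : ℕ) ∧ P ∈ A.balancedPairs blue δ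

/-- Data of a down-crossing of the `k`-th blue curve producing the balanced pair `P`. -/
def DnProp (A : AllowableSeq n) (blue : Fin n → Bool) (δ : ℤ) (k : ℕ)
    (P : Sym2 (Fin n)) : Prop :=
  ∃ (t : ℤ) (β ρ : Fin n), P = s(β, ρ) ∧ blue β = true ∧ blue ρ = false ∧
    cnt A blue t β = k - 1 ∧ A.swp t = s(β, ρ) ∧
    (A.pos t β : ℕ) + 1 = (A.pos t ρ : ℕ) ∧ P ∈ A.balancedPairs blue δ

lemma mk_up (A : AllowableSeq n) (blue : Fin n → Bool) (δ : ℤ) {j : ℕ} {γ : ℤ → Fin n}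
    (hγ : ∀ s : ℤ, γ s ∈ Blues blue ∧ cnt A blue s (γ s) = j) {t : ℤ}
    (h1 : A.cweight blue γ t = δ - 1) (h2 : A.cweight blue γ (t + 1) = δ) :
    ∃ P, UpProp A blue δ (j + 1) P := by
  rcases A.step_main blue hγ t with heq | ⟨ρ, hρ, hγe, hsw, hcase⟩
  · rw [h1, h2] at heq; omega
  rcases hcase with ⟨hord, hws, hls⟩ | ⟨hord, hws, hls⟩
  · -- up branch
    have hβ : blue (γ t) = true := by
      have := (hγ t).1
      rw [Blues, Finset.mem_filter] at this
      exact this.2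
    have hδs : lsum A blue t (A.pos t ρ : ℕ) = δ := by rw [hls, h2]
    have hbal : s(γ t, ρ) ∈ A.balancedPairs blue δ := by
      refine ⟨γ t, ρ, t, rfl, hsw, by rw [hβ, hρ]; simp, ?_⟩
      have hmin : min (A.pos t (γ t) : ℕ) (A.pos t ρ : ℕ) = (A.pos t ρ : ℕ) :=
        min_eq_right (by omega)
      rw [hmin]
      unfold lsum at hδs
      exact hδs
    exact ⟨s(γ t, ρ), t, γ t, ρ, rfl, hβ, hρ, by rw [Nat.add_sub_cancel]; exact (hγ t).2,
      A.swp_eq_of_swapsAt hsw, hord, hbal⟩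
  · rw [h1, h2] at hws; omega

lemma mk_dn (A : AllowableSeq n) (blue : Fin n → Bool) (δ : ℤ) {j : ℕ} {γ : ℤ → Fin n}
    (hγ : ∀ s : ℤ, γ s ∈ Blues blue ∧ cnt A blue s (γ s) = j) {t : ℤ}
    (h1 : A.cweight blue γ t = δ) (h2 : A.cweight blue γ (t + 1) = δ - 1) :
    ∃ P, DnProp A blue δ (j + 1) P := by
  rcases A.step_main blue hγ t with heq | ⟨ρ, hρ, hγe, hsw, hcase⟩
  · rw [h1, h2] at heq; omega
  rcases hcase with ⟨hord, hws, hls⟩ | ⟨hord, hws, hls⟩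
  · rw [h1, h2] at hws; omega
  · -- down branch
    have hβ : blue (γ t) = true := by
      have := (hγ t).1
      rw [Blues, Finset.mem_filter] at this
      exact this.2
    have hδs : lsum A blue t (A.pos t (γ t) : ℕ) = δ := by rw [hls, h1]
    have hbal : s(γ t, ρ) ∈ A.balancedPairs blue δ := by
      refine ⟨γ t, ρ, t, rfl, hsw, by rw [hβ, hρ]; simp, ?_⟩
      have hmin : min (A.pos t (γ t) : ℕ) (A.pos t ρ : ℕ) = (A.pos t (γ t) : ℕ) :=
        min_eq_left (by omega)
      rw [hmin]
      unfold lsum at hδs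
      exact hδs
    exact ⟨s(γ t, ρ), t, γ t, ρ, rfl, hβ, hρ, by rw [Nat.add_sub_cancel]; exact (hγ t).2,
      A.swp_eq_of_swapsAt hsw, hord, hbal⟩

/-- Unpack a collision between two crossing data for the same pair. -/
lemma collision_core (A : AllowableSeq n) (blue : Fin n → Bool)
    {t t' : ℤ} {β ρ β' ρ' : Fin n}
    (hβ : blue β = true) (hρ : blue ρ = false)
    (hβ' : blue β' = true) (hρ' : blue ρ' = false)
    (hP : s(β, ρ) = s(β', ρ'))
    (hswp : A.swp t = s(β, ρ)) (hswp' : A.swp t' = s(β', ρ')) :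
    β' = β ∧ ρ' = ρ ∧
      (A.pos t' = A.pos t ∨ A.pos t' = (A.pos t).trans Fin.revPerm) := by
  have hee : β' = β ∧ ρ' = ρ := by
    rcases Sym2.eq_iff.1 hP with ⟨h1, h2⟩ | ⟨h1, h2⟩
    · exact ⟨h1.symm, h2.symm⟩
    · exfalso; rw [h1] at hβ; rw [hβ] at hρ'; exact Bool.noConfusion hρ'
  obtain ⟨he1, he2⟩ := hee
  have hne : β ≠ ρ := by
    intro he
    rw [he] at hβ
    rw [hβ] at hρ
    exact Bool.noConfusion hρ
  refine ⟨he1, he2, ?_⟩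
  rw [he1, he2] at hswp'
  exact A.swap_times_pos hne hswp hswp'

lemma up_up (A : AllowableSeq n) (blue : Fin n → Bool) {δ : ℤ} {k k' : ℕ}
    (hk : 1 ≤ k) (hk' : 1 ≤ k') {P : Sym2 (Fin n)}
    (h1 : UpProp A blue δ k P) (h2 : UpProp A blue δ k' P) : k = k' := by
  obtain ⟨t, β, ρ, hPe, hβ, hρ, hcnt, hswp, hord, -⟩ := h1
  obtain ⟨t', β', ρ', hPe', hβ', hρ', hcnt', hswp', hord', -⟩ := h2
  obtain ⟨he1, he2, hpos⟩ := A.collision_core blue hβ hρ hβ' hρ'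
    (hPe.symm.trans hPe') hswp hswp'
  rw [he1] at hcnt' hswp' hord'
  rw [he2] at hswp' hord'
  rcases hpos with hpos | hpos
  · have := A.cnt_congr blue hpos β
    rw [hcnt, hcnt'] at this
    omega
  · exfalso
    have hv1 := A.pos_rev_val hpos β
    have hv2 := A.pos_rev_val hpos ρ
    have hb1 := (A.pos t β).isLt
    have hb2 := (A.pos t ρ).isLt
    omega

lemma dn_dn (A : AllowableSeq n) (blue : Fin n → Bool) {δ : ℤ} {k k' : ℕ}
    (hk : 1 ≤ k) (hk' : 1 ≤ k') {P : Sym2 (Fin n)}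
    (h1 : DnProp A blue δ k P) (h2 : DnProp A blue δ k' P) : k = k' := by
  obtain ⟨t, β, ρ, hPe, hβ, hρ, hcnt, hswp, hord, -⟩ := h1
  obtain ⟨t', β', ρ', hPe', hβ', hρ', hcnt', hswp', hord', -⟩ := h2
  obtain ⟨he1, he2, hpos⟩ := A.collision_core blue hβ hρ hβ' hρ'
    (hPe.symm.trans hPe') hswp hswp'
  rw [he1] at hcnt' hswp' hord'
  rw [he2] at hswp' hord'
  rcases hpos with hpos | hpos
  · have := A.cnt_congr blue hpos β
    rw [hcnt, hcnt'] at this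
    omega
  · exfalso
    have hv1 := A.pos_rev_val hpos β
    have hv2 := A.pos_rev_val hpos ρ
    have hb1 := (A.pos t β).isLt
    have hb2 := (A.pos t ρ).isLt
    omega

lemma up_dn (A : AllowableSeq n) (blue : Fin n → Bool) {δ : ℤ} {k k' : ℕ}
    (hk : 1 ≤ k) (hk' : 1 ≤ k') {P : Sym2 (Fin n)}
    (h1 : UpProp A blue δ k P) (h2 : DnProp A blue δ k' P) :
    k + k' = (Blues blue).card + 1 := by
  obtain ⟨t, β, ρ, hPe, hβ, hρ, hcnt, hswp, hord, -⟩ := h1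
  obtain ⟨t', β', ρ', hPe', hβ', hρ', hcnt', hswp', hord', -⟩ := h2
  obtain ⟨he1, he2, hpos⟩ := A.collision_core blue hβ hρ hβ' hρ'
    (hPe.symm.trans hPe') hswp hswp'
  rw [he1] at hcnt' hswp' hord'
  rw [he2] at hswp' hord'
  rcases hpos with hpos | hpos
  · exfalso
    have hv1 : (A.pos t' β : ℕ) = (A.pos t β : ℕ) := by rw [hpos]
    have hv2 : (A.pos t' ρ : ℕ) = (A.pos t ρ : ℕ) := by rw [hpos]
    omega
  · have hmem : β ∈ Blues blue := by
      rw [Blues, Finset.mem_filter]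
      exact ⟨Finset.mem_univ _, hβ⟩
    have := A.cnt_rev blue hpos hmem
    rw [hcnt, hcnt'] at this
    omega

lemma isKth_of (A : AllowableSeq n) (blue : Fin n → Bool) {j : ℕ} {γ : ℤ → Fin n}
    (hγ : ∀ s : ℤ, γ s ∈ Blues blue ∧ cnt A blue s (γ s) = j) :
    A.IsKth (Finset.univ.filter (fun x => blue x = true)) (j + 1) γ := by
  intro t
  refine ⟨(hγ t).1, ?_⟩
  have h := (hγ t).2
  unfold cnt lcnt at h
  have h2 : (Finset.univ.filter (fun x => blue x = true)).filter
      (fun x => A.pos t x < A.pos t (γ t)) =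
      ((Blues blue).filter (fun y => (A.pos t y : ℕ) < (A.pos t (γ t) : ℕ))) := by
    unfold Blues
    exact Finset.filter_congr fun y _ => Fin.lt_def
  rw [Nat.add_sub_cancel, h2]
  exact h

end AllowableSeq

namespace AllowableSeq

lemma crossings {n : ℕ} (b r δ : ℕ) (A : AllowableSeq n) (blue : Fin n → Bool)
    (hn : n = b + r)
    (hb : (Finset.univ.filter (fun x => blue x = true)).card = b)
    (hr : (Finset.univ.filter (fun x => blue x = false)).card = r)
    (hbr : b = r + 2 * δ) (hr1 : 1 ≤ r)
    (hall : ∀ k : ℕ, δ + 1 ≤ k → k ≤ b / 2 →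
      ∀ γ : ℤ → Fin n, A.IsKth (Finset.univ.filter (fun x => blue x = true)) k γ →
        ¬ (∀ t : ℤ, (δ : ℤ) ≤ A.cweight blue γ t) ∧
        ¬ (∀ t : ℤ, A.cweight blue γ t < (δ : ℤ)))
    (k : ℕ) (hk1 : δ + 1 ≤ k) (hk2 : k ≤ (b + 1) / 2) :
    (∃ P, UpProp A blue (δ : ℤ) k P) ∧ (∃ P, DnProp A blue (δ : ℤ) k P) := by
  classical
  have hB : (Blues blue).card = b := hb
  set j := k - 1 with hj
  have hk : j + 1 = k := by omega
  have hjb : j < (Blues blue).card := by rw [hB]; omega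
  have hex : ∀ t : ℤ, ∃ x, x ∈ Blues blue ∧ cnt A blue t x = j :=
    fun t => A.kth_exists' blue t j hjb
  set γ : ℤ → Fin n := fun t => (hex t).choose with hγdef
  have hγ : ∀ t : ℤ, γ t ∈ Blues blue ∧ cnt A blue t (γ t) = j :=
    fun t => (hex t).choose_spec
  have h2n : 2 ≤ n := by omega
  have hC : 0 < hp n := by
    have := Nat.choose_pos h2n
    unfold hp
    omega
  have hstep : ∀ t : ℤ, A.cweight blue γ (t + 1) = A.cweight blue γ t ∨
      A.cweight blue γ (t + 1) = A.cweight blue γ t + 1 ∨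
      A.cweight blue γ t = A.cweight blue γ (t + 1) + 1 := by
    intro t
    rcases A.step_main blue hγ t with h | ⟨ρ, _, _, _, hcase⟩
    · exact Or.inl h
    rcases hcase with ⟨_, hws, _⟩ | ⟨_, hws, _⟩
    · exact Or.inr (Or.inl hws)
    · exact Or.inr (Or.inr hws)
  have hγper : ∀ t : ℤ, γ (t + 2 * hp n) = γ t := by
    intro t
    have hpp := A.pos_period t
    apply kth_eq A blue (hγ (t + 2 * hp n)).1 (hγ t).1
    rw [(hγ (t + 2 * hp n)).2, A.cnt_congr blue hpp (γ t), (hγ t).2]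
  have hper : ∀ t : ℤ, A.cweight blue γ (t + 2 * hp n) = A.cweight blue γ t :=
    fun t => A.cweight_congr blue γ (A.pos_period t) (hγper t)
  have hlh : (∃ t1, A.cweight blue γ t1 < (δ : ℤ)) ∧
      (∃ t2, (δ : ℤ) ≤ A.cweight blue γ t2) := by
    by_cases hkb : k ≤ b / 2
    · have hKth : A.IsKth (Finset.univ.filter (fun x => blue x = true)) k γ := by
        rw [← hk]
        exact A.isKth_of blue hγ
      obtain ⟨hno1, hno2⟩ := hall k hk1 hkb γ hKth
      push_neg at hno1 hno2
      obtain ⟨t1, ht1⟩ := hno1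
      obtain ⟨t2, ht2⟩ := hno2
      exact ⟨⟨t1, ht1⟩, ⟨t2, ht2⟩⟩
    · -- the middle curve of an odd number of blue points: automatically δ-changing
      have hbj : b = 2 * j + 1 := by omega
      have hmir : ∀ t : ℤ, γ (t + hp n) = γ t := by
        intro t
        have hrevt : A.pos (t + hp n) = (A.pos t).trans Fin.revPerm := by
          unfold hp
          exact A.rev t
        have hcR := A.cnt_rev blue hrevt (hγ t).1
        rw [(hγ t).2, hB] at hcR
        apply kth_eq A blue (hγ (t + hp n)).1 (hγ t).1
        rw [(hγ (t + hp n)).2]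
        omega
      have hcw : ∀ t : ℤ, A.cweight blue γ (t + hp n)
          = 2 * (δ : ℤ) - 1 - A.cweight blue γ t := by
        intro t
        have hrevt : A.pos (t + hp n) = (A.pos t).trans Fin.revPerm := by
          unfold hp
          exact A.rev t
        have hblue : blue (γ t) = true := by
          have hm := (hγ t).1
          rw [Blues, Finset.mem_filter] at hm
          exact hm.2
        have hcr := A.cweight_rev blue γ hrevt (hmir t) hblue
        rw [sum_wt blue b r hb hr] at hcr
        have hbrz : (b : ℤ) - r = 2 * δ := by push_cast; omega
        omega
      by_cases h0 : A.cweight blue γ 0 < (δ : ℤ)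
      · refine ⟨⟨0, h0⟩, ⟨0 + hp n, ?_⟩⟩
        rw [hcw 0]
        omega
      · push_neg at h0
        refine ⟨⟨0 + hp n, ?_⟩, ⟨0, h0⟩⟩
        rw [hcw 0]
        omega
  obtain ⟨⟨t1, ht1⟩, ⟨t2, ht2⟩⟩ := hlh
  obtain ⟨⟨tu, hu1, hu2⟩, ⟨td, hd1, hd2⟩⟩ := ivt_both (A.cweight blue γ) (δ : ℤ)
    (2 * hp n) (by omega) hper hstep t1 t2 ht1 ht2
  constructor
  · have hres := A.mk_up blue (δ : ℤ) hγ hu1 hu2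
    rwa [hk] at hres
  · have hres := A.mk_dn blue (δ : ℤ) hγ hd1 hd2
    rwa [hk] at hres

end AllowableSeq


open AllowableSeq

theorem case1_all_changing (n b r δ : ℕ) (A : AllowableSeq n) (blue : Fin n → Bool)
    (hn : n = b + r)
    (hb : (Finset.univ.filter (fun x => blue x = true)).card = b)
    (hr : (Finset.univ.filter (fun x => blue x = false)).card = r)
    (hbr : b = r + 2 * δ)
    (hall : ∀ k : ℕ, δ + 1 ≤ k → k ≤ b / 2 →
      ∀ γ : ℤ → Fin n, A.IsKth (Finset.univ.filter (fun x => blue x = true)) k γ →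
        ¬ (∀ t : ℤ, (δ : ℤ) ≤ A.cweight blue γ t) ∧
        ¬ (∀ t : ℤ, A.cweight blue γ t < (δ : ℤ))) :
    r ≤ (A.balancedPairs blue (δ : ℤ)).ncard := by
  classical
  rcases Nat.eq_zero_or_pos r with hr0 | hr1
  · rw [hr0]
    exact Nat.zero_le _
  have h2n : 2 ≤ n := by omega
  have x0 : Fin n := ⟨0, by omega⟩
  have hB : (Blues blue).card = b := hb
  have hU : ∀ k : ℕ, ∃ P : Sym2 (Fin n),
      (δ + 1 ≤ k ∧ k ≤ (b + 1) / 2) → UpProp A blue (δ : ℤ) k P := by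
    intro k
    by_cases hk : δ + 1 ≤ k ∧ k ≤ (b + 1) / 2
    · obtain ⟨P, hP⟩ := (crossings b r δ A blue hn hb hr hbr hr1 hall k hk.1 hk.2).1
      exact ⟨P, fun _ => hP⟩
    · exact ⟨s(x0, x0), fun hc => absurd hc hk⟩
  have hD : ∀ k : ℕ, ∃ P : Sym2 (Fin n),
      (δ + 1 ≤ k ∧ k ≤ b / 2) → DnProp A blue (δ : ℤ) k P := by
    intro k
    by_cases hk : δ + 1 ≤ k ∧ k ≤ b / 2
    · obtain ⟨P, hP⟩ := (crossings b r δ A blue hn hb hr hbr hr1 hall k hk.1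
        (by omega)).2
      exact ⟨P, fun _ => hP⟩
    · exact ⟨s(x0, x0), fun hc => absurd hc hk⟩
  choose Pu hPu using hU
  choose Pd hPd using hD
  have hup : ∀ k, δ + 1 ≤ k → k ≤ (b + 1) / 2 → UpProp A blue (δ : ℤ) k (Pu k) :=
    fun k h1 h2 => hPu k ⟨h1, h2⟩
  have hdn : ∀ k, δ + 1 ≤ k → k ≤ b / 2 → DnProp A blue (δ : ℤ) k (Pd k) :=
    fun k h1 h2 => hPd k ⟨h1, h2⟩
  set I : Finset (ℕ × Bool) :=
    ((Finset.Icc (δ + 1) ((b + 1) / 2)) ×ˢ ({true} : Finset Bool)) ∪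
    ((Finset.Icc (δ + 1) (b / 2)) ×ˢ ({false} : Finset Bool)) with hI
  set F : ℕ × Bool → Sym2 (Fin n) := fun kd => cond kd.2 (Pu kd.1) (Pd kd.1) with hF
  have hdec : ∀ kd ∈ I, (kd.2 = true ∧ δ + 1 ≤ kd.1 ∧ kd.1 ≤ (b + 1) / 2) ∨
      (kd.2 = false ∧ δ + 1 ≤ kd.1 ∧ kd.1 ≤ b / 2) := by
    intro kd hkd
    rw [hI] at hkd
    simp only [Finset.mem_union, Finset.mem_product, Finset.mem_Icc,
      Finset.mem_singleton] at hkd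
    tauto
  have hmem : ∀ kd ∈ I, F kd ∈ A.balancedPairs blue (δ : ℤ) := by
    intro kd hkd
    rcases hdec kd hkd with ⟨h2, h3, h4⟩ | ⟨h2, h3, h4⟩
    · obtain ⟨t, β, ρ, hPe, _, _, _, _, _, hbal⟩ := hup kd.1 h3 h4
      simp only [hF, h2, cond_true]
      exact hbal
    · obtain ⟨t, β, ρ, hPe, _, _, _, _, _, hbal⟩ := hdn kd.1 h3 h4
      simp only [hF, h2, cond_false]
      exact hbal
  have hinj : Set.InjOn F I := by
    intro a ha c hc hFac
    rcases hdec a ha with ⟨ha2, ha3, ha4⟩ | ⟨ha2, ha3, ha4⟩ <;>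
      rcases hdec c hc with ⟨hc2, hc3, hc4⟩ | ⟨hc2, hc3, hc4⟩
    · simp only [hF, ha2, hc2, cond_true] at hFac
      have h1 := hup a.1 ha3 ha4
      have h2 := hup c.1 hc3 hc4
      rw [← hFac] at h2
      have := A.up_up blue (by omega) (by omega) h1 h2
      exact Prod.ext this (by rw [ha2, hc2])
    · exfalso
      simp only [hF, ha2, hc2, cond_true, cond_false] at hFac
      have h1 := hup a.1 ha3 ha4
      have h2 := hdn c.1 hc3 hc4
      rw [← hFac] at h2
      have := A.up_dn blue (by omega) (by omega) h1 h2
      rw [hB] at this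
      omega
    · exfalso
      simp only [hF, ha2, hc2, cond_true, cond_false] at hFac
      have h1 := hup c.1 hc3 hc4
      have h2 := hdn a.1 ha3 ha4
      rw [hFac] at h2
      have := A.up_dn blue (by omega) (by omega) h1 h2
      rw [hB] at this
      omega
    · simp only [hF, ha2, hc2, cond_false] at hFac
      have h1 := hdn a.1 ha3 ha4
      have h2 := hdn c.1 hc3 hc4
      rw [← hFac] at h2
      have := A.dn_dn blue (by omega) (by omega) h1 h2
      exact Prod.ext this (by rw [ha2, hc2])
  have hIcard : I.card = r := by
    rw [hI, Finset.card_union_of_disjoint]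
    · simp only [Finset.card_product, Finset.card_singleton, Nat.card_Icc, mul_one]
      omega
    · rw [Finset.disjoint_left]
      rintro ⟨k, d⟩ hx hy
      simp only [Finset.mem_product, Finset.mem_singleton] at hx hy
      rw [hx.2] at hy
      exact Bool.noConfusion hy.2
  have hsub : ↑(I.image F) ⊆ A.balancedPairs blue (δ : ℤ) := by
    intro z hz
    rw [Finset.coe_image] at hz
    obtain ⟨kd, hkd, rfl⟩ := hz
    exact hmem kd hkd
  have hle := Set.ncard_le_ncard hsub (Set.toFinite _)
  rw [Set.ncard_coe_finset, Finset.card_image_of_injOn hinj, hIcard] at hle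
  exact hle
end
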